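/- arXiv:1603.07570 — 3 statements merged into one kernel-verified Lean document; each statement's English description precedes it below -/
import Mathlib

section
/- Suppose (R,G) and (R,H) are balanced rooted graphs which agree on R (same root set and same edges inside R) with V(G) ∩ V(H) = R, and both have rooted density m(R,G) = m(R,H) = d. Then (R, G ∪ H) is a balanced rooted graph with m(R, G ∪ H) = d. -/
open Filter Asymptotics
open scoped Classical ENNReal

noncomputable section

namespace OG

/-! ### Finite graphs, represented as subgraphs of a complete graph -/

abbrev Sub (W : Type*) := (⊤ : SimpleGraph W).Subgraph

variable {W U X : Type*}

/-- number of vertices -/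
def nverts (G : Sub W) : ℕ := G.verts.ncard

/-- number of edges -/
def nedges (G : Sub W) : ℕ := G.edgeSet.ncard

/-- the density `d(G) = e_G / v_G` -/
def dd (G : Sub W) : ℝ := (nedges G : ℝ) / (nverts G : ℝ)

/-- the `1`-density `d₁(G) = e_G / (v_G - 1)` -/
def d1 (G : Sub W) : ℝ := (nedges G : ℝ) / ((nverts G : ℝ) - 1)

/-- the `2`-density `d₂(G) = (e_G - 1)/(v_G - 2)` -/
def d2 (G : Sub W) : ℝ := ((nedges G : ℝ) - 1) / ((nverts G : ℝ) - 2)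

/-- `m(G) = max_{H ⊆ G} d(H)` -/
def mD (G : Sub W) : ℝ := ⨆ H : {H : Sub W // H ≤ G}, dd H.1

/-- `m₁(G) = max_{H ⊆ G} d₁(H)` -/
def m1D (G : Sub W) : ℝ := ⨆ H : {H : Sub W // H ≤ G}, d1 H.1

/-- `m₂(G) = max_{H ⊆ G} d₂(H)` (over subgraphs with at least one edge;
on edgeless subgraphs the convention `0/0 = 0` applies) -/
def m2D (G : Sub W) : ℝ := ⨆ H : {H : Sub W // H ≤ G ∧ 1 ≤ nedges H}, d2 H.1

/-- `G` is 2-balanced if `m₂(G) = d₂(G)`. -/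
def TwoBalanced (G : Sub W) : Prop := m2D G = d2 G

/-- the recursively defined densities `m̄ʳ₂(G)`. -/
def mbar (G : Sub W) : ℕ → ℝ
  | 0 => 0
  | 1 => mD G
  | k + 2 => ⨆ H : {H : Sub W // H ≤ G},
      (nedges H.1 : ℝ) / ((nverts H.1 : ℝ) - 2 + 1 / mbar G (k + 1))

/-- view a `SimpleGraph` on a vertex type `V` as a graph with vertex set all of `V`. -/
def toSub {V : Type*} (G : SimpleGraph V) : Sub V where
  verts := Set.univ
  Adj := G.Adj
  adj_sub := fun h => G.ne_of_adj h
  edge_vert := fun _ => Set.mem_univ _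
  symm := G.symm

/-! ### Rooted graphs -/

/-- number of edges of `G` inside the root set `R`, i.e. `e_{G[R]}`. -/
def rInEdges (R : Set W) (G : Sub W) : ℕ := {e ∈ G.edgeSet | ∀ x ∈ e, x ∈ R}.ncard

/-- the density `d(R,G) = ē_G / v̄_G` of a rooted graph (with the roots `R ∩ V(G)`). -/
def rdd (R : Set W) (G : Sub W) : ℝ :=
  ((nedges G : ℝ) - (rInEdges R G : ℝ)) / ((nverts G : ℝ) - ((G.verts ∩ R).ncard : ℝ))

/-- `m(R,G) = max_{H ⊆ G} d(R ∩ V(H), H)` -/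
def mRooted (R : Set W) (G : Sub W) : ℝ := ⨆ H : {H : Sub W // H ≤ G}, rdd R H.1

/-- a rooted graph is balanced if its density attains `m(R,G)`. -/
def BalancedRooted (R : Set W) (G : Sub W) : Prop := mRooted R G = rdd R G

/-- the rooted `2`-density `d₂(R,G,t)`, valued in `ℝ≥0∞`. -/
def d2t (R : Set W) (G : Sub W) (t : ℝ) : ℝ≥0∞ :=
  if 0 < (nverts G : ℝ) - 2 - t * (rInEdges R G : ℝ) then
    ENNReal.ofReal ((((nedges G : ℝ) - (rInEdges R G : ℝ)) - 1) /
      ((nverts G : ℝ) - 2 - t * (rInEdges R G : ℝ)))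
  else ⊤

/-- `m₂(R,G,t)`, the maximum of `d₂(R ∩ V(H), H, t)` over subgraphs `H ⊆ G` with `ē_H > 1`. -/
def m2t (R : Set W) (G : Sub W) (t : ℝ) : ℝ≥0∞ :=
  ⨆ H : {H : Sub W // H ≤ G ∧ rInEdges R H + 2 ≤ nedges H}, d2t R H.1 t


/-! ### Products of rooted graphs and the families 𝓕ᵏ -/

/-- `e` is a non-root edge of `Fg` w.r.t. the root set `R`. -/
def NRe (Fg : Sub W) (R : Set W) (e : Sym2 W) : Prop := e ∈ Fg.edgeSet ∧ ¬ ∀ x ∈ e, x ∈ R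

/-- `P` (together with the placement maps `φ`, `ψ`) is a copy of the product `(R,Fg) × (h₁h₂, H)`:
it is obtained from `Fg` by attaching to every non-root edge of `Fg` a new copy of `H`,
rooted at that edge (the edge itself being kept iff `h₁h₂ ∈ E(H)`). -/
def IsProdCopyData (Fg : Sub W) (R : Set W) (H : Sub U) (h₁ h₂ : U) (P : Sub X)
    (φ : W → X) (ψ : Sym2 W → U → X) : Prop :=
  Set.InjOn φ Fg.verts ∧
  (∀ e, NRe Fg R e → Set.InjOn (ψ e) H.verts) ∧
  (∀ e, NRe Fg R e → ∀ x y : W, e = s(x, y) →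
      ({ψ e h₁, ψ e h₂} : Set X) = {φ x, φ y}) ∧
  (∀ e e', NRe Fg R e → NRe Fg R e' → e ≠ e' →
      Disjoint (ψ e '' (H.verts \ {h₁, h₂})) (ψ e' '' (H.verts \ {h₁, h₂}))) ∧
  (∀ e, NRe Fg R e → Disjoint (ψ e '' (H.verts \ {h₁, h₂})) (φ '' Fg.verts)) ∧
  (P.verts = φ '' Fg.verts ∪ ⋃ e ∈ {e | NRe Fg R e}, ψ e '' H.verts) ∧
  (∀ x y, P.Adj x y ↔
    ((∃ p q, Fg.Adj p q ∧ p ∈ R ∧ q ∈ R ∧ x = φ p ∧ y = φ q) ∨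
      ∃ e, NRe Fg R e ∧ ∃ p q, H.Adj p q ∧ x = ψ e p ∧ y = ψ e q))

/-- `P` is a copy of the product `(R,Fg) × (h₁h₂, H)` placed by `φ`. -/
def IsProdCopy (Fg : Sub W) (R : Set W) (H : Sub U) (h₁ h₂ : U) (P : Sub X) (φ : W → X) : Prop :=
  ∃ ψ, IsProdCopyData Fg R H h₁ h₂ P φ ψ

/-- `InF F u v k G a b` : the graph `G` rooted at `(a, b)` is (a copy of) a member of
the family `𝓕ᵏ` built from the graph `F` with distinguished edge `{u,v}`.
`𝓕¹` consists of a single edge rooted at its endpoints, and for `k ≥ 2`,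
`𝓕ᵏ = { ⊔_{1 ≤ i < k} (e,F)×(eᵢ,Fᵢ*) : Fᵢ* ∈ 𝓕^{≤i} }`, the parts being joined
at the common roots and otherwise disjoint. -/
inductive InF (F : Sub ℕ) (u v : ℕ) : ℕ → Sub ℕ → ℕ → ℕ → Prop
  | base (a b : ℕ) (G : Sub ℕ) (hab : a ≠ b) (hv : G.verts = {a, b})
      (he : G.edgeSet = {s(a, b)}) : InF F u v 1 G a b
  | step (k a b : ℕ) (P : ℕ → Sub ℕ) (G : Sub ℕ)
      (j : ℕ → ℕ) (Fi : ℕ → Sub ℕ) (c d : ℕ → ℕ) (φ : ℕ → ℕ → ℕ)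
      (hk : 2 ≤ k)
      (hj : ∀ i, 1 ≤ i → i < k → 1 ≤ j i ∧ j i ≤ i)
      (hrec : ∀ i, 1 ≤ i → i < k → InF F u v (j i) (Fi i) (c i) (d i))
      (hprod : ∀ i, 1 ≤ i → i < k →
        IsProdCopy F {u, v} (Fi i) (c i) (d i) (P i) (φ i) ∧
          ({φ i u, φ i v} : Set ℕ) = {a, b})
      (hdisj : ∀ i i', 1 ≤ i → i < k → 1 ≤ i' → i' < k → i ≠ i' →
        (P i).verts ∩ (P i').verts = {a, b})
      (hG : G = ⨆ i ∈ Set.Ico 1 k, P i) : InF F u v k G a b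

/-- membership in `𝓕^{≤ m} = ∪_{1 ≤ j ≤ m} 𝓕ʲ`. -/
def InFle (F : Sub ℕ) (u v : ℕ) (m : ℕ) (G : Sub ℕ) (a b : ℕ) : Prop :=
  ∃ j, 1 ≤ j ∧ j ≤ m ∧ InF F u v j G a b


/-! ### Partite graphs, regularity -/

/-- number of edges of a `SimpleGraph`. -/
def eCnt {V : Type*} (G : SimpleGraph V) : ℕ := G.edgeSet.ncard

/-- number of edges of `G` having all endpoints inside `R`, i.e. `e_{G[R]}`. -/
def eIn {V : Type*} (G : SimpleGraph V) (R : Finset V) : ℕ :=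
  {e ∈ G.edgeSet | ∀ x ∈ e, x ∈ R}.ncard

/-- `F₋`: the graph `F` with all edges inside the root set `R` removed. -/
def Fm {V : Type*} (F : SimpleGraph V) (R : Finset V) : SimpleGraph V :=
  F.deleteEdges {e | ∀ x ∈ e, x ∈ R}

/-- edge density of the bipartite pair `(s,t)` in `G`. -/
def bidensity {V : Type*} (G : SimpleGraph V) (s t : Finset V) : ℝ :=
  ({pq : V × V | pq.1 ∈ s ∧ pq.2 ∈ t ∧ G.Adj pq.1 pq.2}.ncard : ℝ) /
    ((s.card : ℝ) * (t.card : ℝ))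

/-- the pair `(s,t)` is `(ε)`-regular in `G`: for all `s' ⊆ s`, `t' ⊆ t` with
`|s'| ≥ ε|s|`, `|t'| ≥ ε|t|` the density deviates by at most `ε` times the density of the pair. -/
def EpsRegular {V : Type*} (G : SimpleGraph V) (ε : ℝ) (s t : Finset V) : Prop :=
  ∀ s' t' : Finset V, s' ⊆ s → t' ⊆ t → ε * s.card ≤ s'.card → ε * t.card ≤ t'.card →
    |bidensity G s' t' - bidensity G s t| ≤ ε * bidensity G s t

/-- the `i`-th vertex class `V_i` of the canonical `|ι|`-partite vertex set `ι × Fin n`. -/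
def prt (ι : Type*) [Fintype ι] (n : ℕ) (i : ι) : Finset (ι × Fin n) :=
  Finset.univ.filter fun pq => pq.1 = i

variable {ι : Type*} [Fintype ι]

/-- `G` is partite w.r.t. `Fm`: its edges run only between vertex classes
corresponding to edges of `Fm`. -/
def partiteOn (Fmg : SimpleGraph ι) (n : ℕ) (G : SimpleGraph (ι × Fin n)) : Prop :=
  ∀ x y, G.Adj x y → Fmg.Adj x.1 y.1

/-- number of edges of `G` between the classes `V_i` and `V_j`. -/
def ebp (n : ℕ) (G : SimpleGraph (ι × Fin n)) (i j : ι) : ℕ :=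
  {pq : (ι × Fin n) × (ι × Fin n) | pq.1.1 = i ∧ pq.2.1 = j ∧ G.Adj pq.1 pq.2}.ncard

/-- `G ∈ 𝓖(Fmg, n, m, ε)`: `G` is `Fmg`-partite, with exactly `m` edges between classes
joined by an edge of `Fmg`, all such pairs being `(ε)`-regular. -/
def inG (Fmg : SimpleGraph ι) (n m : ℕ) (ε : ℝ) (G : SimpleGraph (ι × Fin n)) : Prop :=
  partiteOn Fmg n G ∧
    ∀ i j, Fmg.Adj i j → ebp n G i j = m ∧ EpsRegular G ε (prt ι n i) (prt ι n j)

/-- `G_R` is `(F,q,ε)`-lower-regular. -/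
def LowerReg (F : SimpleGraph ι) (R : Finset ι) (n : ℕ) (GR : Finset ((↥R) → Fin n))
    (q ε : ℝ) : Prop :=
  ∀ Wf : (↥R) → Finset (Fin n), (∀ i, ε * n ≤ ((Wf i).card : ℝ)) →
    q ^ eIn F R * ∏ i, ((Wf i).card : ℝ) ≤ ((GR.filter fun e => ∀ i, e i ∈ Wf i).card : ℝ)

/-- `G_R` is `(F,q)`-upper-extensible. -/
def UpperExt (F : SimpleGraph ι) (R : Finset ι) (n : ℕ) (GR : Finset ((↥R) → Fin n))
    (q : ℝ) : Prop :=
  ∀ S : Finset ι, S ⊆ R → ∀ g : ι → Fin n,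
    ((GR.filter fun e => ∀ i : ↥R, (i : ι) ∈ S → e i = g (i : ι)).card : ℝ) ≤
      q ^ (eIn F R - eIn F S) * (n : ℝ) ^ (R.card - S.card)

/-- the number of edges, counted with multiplicity, of the multi-hypergraph `T(G, G_R)`:
for each `e ∈ G_R` the number of partite copies of `F₋` in `G` containing the vertices of `e`. -/
def Tcount (F : SimpleGraph ι) (R : Finset ι) (n : ℕ) (G : SimpleGraph (ι × Fin n))
    (GR : Finset ((↥R) → Fin n)) : ℕ :=
  ∑ e ∈ GR, {f : ι → Fin n |
      (∀ i j, (Fm F R).Adj i j → G.Adj (i, f i) (j, f j)) ∧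
      ∀ i : ↥R, f (i : ι) = e i}.ncard

/-! ### The hypergraph 𝓔(G_R, F) and its co-degree function -/

/-- the edge set of the partite copy of `Fmg` given by the transversal `f`. -/
def copyEdges (Fmg : SimpleGraph ι) {n : ℕ} (f : ι → Fin n) : Set (Sym2 (ι × Fin n)) :=
  Sym2.map (fun i => (i, f i)) '' Fmg.edgeSet

/-- the degree in `𝓔(G_R,F)` of a set `σ` of vertices (i.e. of edges of `K_{F₋,n}`):
the number of partite copies of `F₋` whose roots form an edge of `G_R` and whose
edge set contains `σ`. -/
def degI (F : SimpleGraph ι) (R : Finset ι) {n : ℕ} (GR : Finset ((↥R) → Fin n))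
    (σ : Finset (Sym2 (ι × Fin n))) : ℕ :=
  {pf : ((↥R) → Fin n) × (ι → Fin n) |
    pf.1 ∈ GR ∧ (∀ i : ↥R, pf.2 (i : ι) = pf.1 i) ∧ ↑σ ⊆ copyEdges (Fm F R) pf.2}.ncard

/-- `d^{(j)}(v)`: the maximal degree of a `j`-set containing `v`. -/
def djI (F : SimpleGraph ι) (R : Finset ι) {n : ℕ} (GR : Finset ((↥R) → Fin n))
    (jj : ℕ) (v : Sym2 (ι × Fin n)) : ℕ :=
  ⨆ σ : {σ : Finset (Sym2 (ι × Fin n)) // v ∈ σ ∧ σ.card = jj}, degI F R GR σ.1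

/-- the co-degree function `δ(𝓔(G_R,F), τ)` of Saxton–Thomason. -/
def codegFn (F : SimpleGraph ι) (R : Finset ι) {n : ℕ} (GR : Finset ((↥R) → Fin n))
    (τ : ℝ) : ℝ :=
  if (∑ v : Sym2 (ι × Fin n), degI F R GR {v}) = 0 then 0 else
    (2 : ℝ) ^ ((eCnt (Fm F R)).choose 2 - 1) *
      ∑ jj ∈ Finset.Icc 2 (eCnt (Fm F R)),
        ((∑ v : Sym2 (ι × Fin n), (djI F R GR jj v : ℝ)) /
            (τ ^ (jj - 1) * ∑ v : Sym2 (ι × Fin n), (degI F R GR {v} : ℝ))) *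
          ((2 : ℝ) ^ ((jj - 1).choose 2))⁻¹


/-! ### The online F-avoidance game -/

/-- the edges of the complete graph `K_n`. -/
abbrev En (n : ℕ) := {e : Sym2 (Fin n) // ¬ e.IsDiag}

/-- a (deterministic) Painter strategy: given the history of previously presented
edges together with their colors, and the newly presented edge, pick a color. -/
abbrev Strategy (n r : ℕ) := List (En n × Fin r) → En n → Fin r

/-- the history (presented edges with their colors, in order) after `N` rounds of
the game in which the edges arrive in the order `π` and Painter plays `σ`. -/
def histF {n r : ℕ} (σ : Strategy n r) (π : Fin (Nat.choose n 2) → En n) :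
    ℕ → List (En n × Fin r)
  | 0 => []
  | i + 1 =>
      histF σ π i ++
        if h : i < Nat.choose n 2 then
          [(π ⟨i, h⟩, σ (histF σ π i) (π ⟨i, h⟩))]
        else []

/-- the edge `e` occurs in the history `L` with color `c`. -/
def ListColored {n r : ℕ} (L : List (En n × Fin r)) (e : Sym2 (Fin n)) (c : Fin r) : Prop :=
  ∃ pr ∈ L, (pr.1 : Sym2 (Fin n)) = e ∧ pr.2 = c

/-- the graph of all edges of color `c` in the history `L`. -/
def colorGraphL {n r : ℕ} (L : List (En n × Fin r)) (c : Fin r) : SimpleGraph (Fin n) :=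
  SimpleGraph.fromEdgeSet {e | ListColored L e c}

/-- the graph of all presented edges in the history `L`. -/
def presentedGraphL {n r : ℕ} (L : List (En n × Fin r)) : SimpleGraph (Fin n) :=
  SimpleGraph.fromEdgeSet {e | ∃ c, ListColored L e c}

/-- the graph of edges colored `c` after `N` rounds. -/
def colorGraph {n r : ℕ} (σ : Strategy n r) (π : Fin (Nat.choose n 2) → En n) (N : ℕ)
    (c : Fin r) : SimpleGraph (Fin n) :=
  colorGraphL (histF σ π N) c

/-- the probability, under an edge ordering chosen uniformly at random among all
`(n choose 2)!` orderings of the edges of `K_n`, of the event `P`. -/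
def gameProb (n : ℕ) (P : (Fin (Nat.choose n 2) → En n) → Prop) : ℝ :=
  ({π : Fin (Nat.choose n 2) → En n | Function.Bijective π ∧ P π}.ncard : ℝ) /
    ({π : Fin (Nat.choose n 2) → En n | Function.Bijective π}.ncard : ℝ)

/-- some color class after `N` rounds contains a copy of the (finite) graph `F`. -/
def MonoCopy (F : Sub ℕ) {n r : ℕ} (σ : Strategy n r) (π : Fin (Nat.choose n 2) → En n)
    (N : ℕ) : Prop :=
  ∃ (c : Fin r) (φ : ℕ → Fin n), Set.InjOn φ F.verts ∧
    ∀ x y, F.Adj x y → (colorGraph σ π N c).Adj (φ x) (φ y)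

/-- Painter survives `N` rounds: after `N` edges have been presented and colored,
no color class contains a copy of `F`. -/
def Survive {α : Type*} (F : SimpleGraph α) {n r : ℕ} (σ : Strategy n r)
    (π : Fin (Nat.choose n 2) → En n) (N : ℕ) : Prop :=
  ∀ c : Fin r, ¬ ∃ φ : α ↪ Fin n, ∀ x y, F.Adj x y → (colorGraph σ π N c).Adj (φ x) (φ y)

/-! ### The binomial random graph -/

/-- probability of the event `P` for the binomial random graph `G(n,p)`. -/
def gnpProb (n : ℕ) (p : ℝ) (P : SimpleGraph (Fin n) → Prop) : ℝ :=
  ∑ G : SimpleGraph (Fin n),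
    if P G then p ^ eCnt G * (1 - p) ^ (Nat.choose n 2 - eCnt G) else 0

/-- the number of copies of the rooted graph `(ρ, G)` (with ordered roots `ρ`) spanned by
the tuple `f` in `Γ`: embeddings of `G - G[R]` carrying the roots `ρ` to `f` in order. -/
def spanCount {α : Type*} (G : SimpleGraph α) {k : ℕ} (ρ : Fin k ↪ α) {n : ℕ}
    (Γ : SimpleGraph (Fin n)) (f : Fin k ↪ Fin n) : ℕ :=
  {φ : α → Fin n | Function.Injective φ ∧ (∀ i, φ (ρ i) = f i) ∧
    ∀ x y, G.Adj x y → ¬(x ∈ Set.range ρ ∧ y ∈ Set.range ρ) → Γ.Adj (φ x) (φ y)}.ncard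

/-! ### F*-spanning subgraphs, upper uniformity -/

/-- `G` is an `F*`-spanning subgraph of `Γ` (where `F*` is rooted at `a, b`):
every edge of `G` is the root pair of a copy of `F*` in `Γ` whose non-root vertices
avoid `V(G)`, these copies being pairwise edge-disjoint. -/
def FStarSpanning {n : ℕ} (Fs : Sub ℕ) (a b : ℕ) (Γ : SimpleGraph (Fin n))
    (G : Sub (Fin n)) : Prop :=
  ∃ κ : Sym2 (Fin n) → ℕ → Fin n,
    (∀ e ∈ G.edgeSet, Set.InjOn (κ e) Fs.verts) ∧
    (∀ e ∈ G.edgeSet, ∀ x y : Fin n, e = s(x, y) →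
      ({κ e a, κ e b} : Set (Fin n)) = {x, y}) ∧
    (∀ e ∈ G.edgeSet, ∀ w ∈ Fs.verts, w ≠ a → w ≠ b → κ e w ∉ G.verts) ∧
    (∀ e ∈ G.edgeSet, ∀ w w', Fs.Adj w w' → Γ.Adj (κ e w) (κ e w')) ∧
    (∀ e ∈ G.edgeSet, ∀ e' ∈ G.edgeSet, e ≠ e' →
      Disjoint (Sym2.map (κ e) '' Fs.edgeSet) (Sym2.map (κ e') '' Fs.edgeSet))

/-- number of edges of `G` from `s` to `t`. -/
def eBetween {V : Type*} (G : Sub V) (s t : Set V) : ℕ :=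
  {pq : V × V | pq.1 ∈ s ∧ pq.2 ∈ t ∧ G.Adj pq.1 pq.2}.ncard

/-- `G` is `(η,q)`-upper-uniform. -/
def UpperUniform {V : Type*} (G : Sub V) (η q : ℝ) : Prop :=
  ∀ s t : Set V, s ⊆ G.verts → t ⊆ G.verts → Disjoint s t →
    η * (nverts G : ℝ) ≤ (s.ncard : ℝ) → η * (nverts G : ℝ) ≤ (t.ncard : ℝ) →
    (eBetween G s t : ℝ) ≤ (1 + η) * q * (s.ncard : ℝ) * (t.ncard : ℝ)

/-! ### Dangerous copies -/

/-- `col` is a dangerous `r`-coloring of `F*₋` for `F* ∈ 𝓕ᵏ` (rooted at `a,b`):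
for some decomposition of `F*` as in the construction of `𝓕ᵏ`, the `k-1` copies of
`F₋` whose roots were identified in the construction are monochromatic, with pairwise
different colors. -/
def DangerousColoring (F : Sub ℕ) (u v : ℕ) (k : ℕ) (Fs : Sub ℕ) (a b : ℕ) (r : ℕ)
    (col : Sym2 ℕ → Fin r) : Prop :=
  k = 1 ∨ ∃ (P : ℕ → Sub ℕ) (c : ℕ → Fin r),
    Fs = (⨆ i ∈ Set.Ico 1 k, P i) ∧
    (∀ i ∈ Set.Ico 1 k, ∀ i' ∈ Set.Ico 1 k, i ≠ i' →
      c i ≠ c i' ∧ (P i).verts ∩ (P i').verts = {a, b}) ∧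
    ∀ i ∈ Set.Ico 1 k, ∃ (j : ℕ) (Fi : Sub ℕ) (c' d' : ℕ) (φ : ℕ → ℕ),
      1 ≤ j ∧ j ≤ i ∧ InF F u v j Fi c' d' ∧
      IsProdCopy F {u, v} Fi c' d' (P i) φ ∧ ({φ u, φ v} : Set ℕ) = {a, b} ∧
      ∀ x y, F.Adj x y → ¬(x ∈ ({u, v} : Set ℕ) ∧ y ∈ ({u, v} : Set ℕ)) →
        col (s(φ x, φ y)) = c i

/-- `P` is a dangerous copy of `F × (e, F*₋)` in the colored graph after `N` rounds:
a copy of the product of `F` (all edges of `F` being used) with `F*₋` rooted at `(a,b)`,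
all of whose attached copies of `F*₋` are colored according to one and the same
dangerous coloring. -/
def IsDangerousCopy (F : Sub ℕ) (u v : ℕ) (r : ℕ) (Fs : Sub ℕ) (a b : ℕ) {n : ℕ}
    (σ : Strategy n r) (π : Fin (Nat.choose n 2) → En n) (N : ℕ) (P : Sub (Fin n)) : Prop :=
  ∃ (φ : ℕ → Fin n) (ψ : Sym2 ℕ → ℕ → Fin n) (col : Sym2 ℕ → Fin r),
    IsProdCopyData F ∅ (Fs.deleteEdges {s(a, b)}) a b P φ ψ ∧
    DangerousColoring F u v r Fs a b r col ∧
    ∀ e, NRe F ∅ e → ∀ x y, (Fs.deleteEdges {s(a, b)}).Adj x y →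
      ListColored (histF σ π N) (s(ψ e x, ψ e y)) (col (s(x, y)))

/-! ### The multi-phase game -/

/-- one phase of the multi-phase game: the edges of `K_n` are scanned in the order `π`;
those belonging to the phase graph `Gph` and not previously presented are presented to
Painter (playing `σ`), who colors them immediately. -/
def phaseStep {n r : ℕ} (σ : Strategy n r) (Gph : SimpleGraph (Fin n))
    (π : Fin (Nat.choose n 2) → En n) (init : List (En n × Fin r)) :
    ℕ → List (En n × Fin r)
  | 0 => init
  | jj + 1 =>
      let L := phaseStep σ Gph π init jj
      if h : jj < Nat.choose n 2 then
        if (((π ⟨jj, h⟩ : En n) : Sym2 (Fin n)) ∈ Gph.edgeSet ∧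
            ∀ pr ∈ L, pr.1 ≠ π ⟨jj, h⟩) then
          L ++ [(π ⟨jj, h⟩, σ L (π ⟨jj, h⟩))]
        else L
      else L

/-- the history after the first `i` phases of the multi-phase game with phase graphs `Gs`
and phase edge-orderings `πs`. -/
def multiHist {n r k : ℕ} (σ : Strategy n r) (Gs : Fin k → SimpleGraph (Fin n))
    (πs : Fin k → Fin (Nat.choose n 2) → En n) : ℕ → List (En n × Fin r)
  | 0 => []
  | i + 1 =>
      if h : i < k then
        phaseStep σ (Gs ⟨i, h⟩) (πs ⟨i, h⟩) (multiHist σ Gs πs i) (Nat.choose n 2)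
      else multiHist σ Gs πs i

/-- probability of the event `P` when `k` independent copies of `G(n,p)` are sampled,
each with an independent uniformly random ordering of the edges of `K_n`. -/
def phasesProb (n k : ℕ) (p : ℝ)
    (P : (Fin k → SimpleGraph (Fin n)) → (Fin k → Fin (Nat.choose n 2) → En n) → Prop) : ℝ :=
  (∑ Gs : Fin k → SimpleGraph (Fin n), ∑ πs : Fin k → Fin (Nat.choose n 2) → En n,
      if (∀ i, Function.Bijective (πs i)) ∧ P Gs πs then
        ∏ i, p ^ eCnt (Gs i) * (1 - p) ^ (Nat.choose n 2 - eCnt (Gs i))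
      else 0) /
    ({π : Fin (Nat.choose n 2) → En n | Function.Bijective π}.ncard : ℝ) ^ k

/-- witness data for Lemma `force regular`: a `t`-partite graph `G` with classes `parts`
of size `nn`, `m` edges between classes, monochromatic in color `col`, which is
`F*`-spanning for the member `(Fs, a, b)` of `𝓕^{≤|S|+1}`. -/
structure Wit (n r t : ℕ) where
  parts : Fin t → Finset (Fin n)
  G : Sub (Fin n)
  col : Fin r
  nn : ℕ
  m : ℕ
  Fs : Sub ℕ
  a : ℕ
  b : ℕ

/-- validity of a witness for Lemma `force regular` (see `Wit`). -/
def WitValid (F : Sub ℕ) (u v : ℕ) {n r t k : ℕ} (S : Finset (Fin r)) (ε η pn : ℝ)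
    (σ : Strategy n r) (Gs : Fin k → SimpleGraph (Fin n))
    (πs : Fin k → Fin (Nat.choose n 2) → En n) (w : Wit n r t) : Prop :=
  w.col ∉ S ∧
  (∃ jj : ℕ, 1 ≤ jj ∧ jj ≤ S.card + 1 ∧ InF F u v jj w.Fs w.a w.b) ∧
  η * (n : ℝ) ≤ (w.nn : ℝ) ∧
  η * (n : ℝ) ^ nverts w.Fs * pn ^ nedges w.Fs ≤ (w.m : ℝ) ∧
  (∀ i, (w.parts i).card = w.nn) ∧
  (∀ i i', i ≠ i' → Disjoint (w.parts i) (w.parts i')) ∧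
  (∀ x y, w.G.Adj x y → ∃ i i', i ≠ i' ∧ x ∈ w.parts i ∧ y ∈ w.parts i') ∧
  (∀ i i', i ≠ i' → eBetween w.G (↑(w.parts i)) (↑(w.parts i')) = w.m ∧
      EpsRegular w.G.spanningCoe ε (w.parts i) (w.parts i')) ∧
  w.G.verts = ⋃ i, ↑(w.parts i) ∧
  (∀ x y, w.G.Adj x y → ListColored (multiHist σ Gs πs k) (s(x, y)) w.col) ∧
  FStarSpanning w.Fs w.a w.b (presentedGraphL (multiHist σ Gs πs k)) w.G

/-- an equitable partition of `Fin n` into `rr` classes. -/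
def Equitable {n rr : ℕ} (P : Fin n → Fin rr) : Prop :=
  ∀ x y : Fin rr, (P ⁻¹' {x}).ncard ≤ (P ⁻¹' {y}).ncard + 1

/-- edges of the simple graph `C` between `s` and `t`. -/
def eBetweenS {V : Type*} (C : SimpleGraph V) (s t : Set V) : ℕ :=
  {pq : V × V | pq.1 ∈ s ∧ pq.2 ∈ t ∧ C.Adj pq.1 pq.2}.ncard
section Stmt13Aux

variable {W : Type}

private lemma og_edgeSet_finite {K : Sub W} (h : K.verts.Finite) : K.edgeSet.Finite := by
  have hsub : K.edgeSet ⊆ (fun p : W × W => s(p.1, p.2)) '' (K.verts ×ˢ K.verts) := by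
    intro e he
    induction e using Sym2.ind with
    | _ x y =>
      have hadj : K.Adj x y := he
      exact ⟨(x, y), ⟨hadj.fst_mem, hadj.snd_mem⟩, rfl⟩
  exact ((h.prod h).image _).subset hsub

private lemma og_rdd_eq (R : Set W) (K : Sub W) (h : K.verts.Finite) :
    rdd R K = (((K.edgeSet \ {e : Sym2 W | ∀ x ∈ e, x ∈ R}).ncard : ℝ)) /
      (((K.verts \ R).ncard : ℝ)) := by
  have hE : K.edgeSet.Finite := og_edgeSet_finite h
  have h1 : (K.edgeSet ∩ {e : Sym2 W | ∀ x ∈ e, x ∈ R}).ncard +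
      (K.edgeSet \ {e : Sym2 W | ∀ x ∈ e, x ∈ R}).ncard = K.edgeSet.ncard :=
    Set.ncard_inter_add_ncard_diff_eq_ncard _ _ hE
  have h2 : (K.verts ∩ R).ncard + (K.verts \ R).ncard = K.verts.ncard :=
    Set.ncard_inter_add_ncard_diff_eq_ncard _ _ h
  have hr : rInEdges R K = (K.edgeSet ∩ {e : Sym2 W | ∀ x ∈ e, x ∈ R}).ncard := by
    unfold rInEdges
    congr 1
  unfold rdd nedges nverts
  rw [hr]
  congr 1
  · have := congrArg (Nat.cast (R := ℝ)) h1
    push_cast at this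
    linarith
  · have := congrArg (Nat.cast (R := ℝ)) h2
    push_cast at this
    linarith

private lemma og_rdd_nonneg (R : Set W) (K : Sub W) (h : K.verts.Finite) :
    0 ≤ rdd R K := by
  rw [og_rdd_eq R K h]; positivity

private lemma og_rdd_le_mRooted (R : Set W) (G : Sub W) (hG : G.verts.Finite)
    {K : Sub W} (hK : K ≤ G) : rdd R K ≤ mRooted R G := by
  have hbdd : BddAbove (Set.range fun H : {H : Sub W // H ≤ G} => rdd R H.1) := by
    refine ⟨(G.edgeSet.ncard : ℝ), ?_⟩
    rintro x ⟨⟨L, hL⟩, rfl⟩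
    show rdd R L ≤ ((G.edgeSet.ncard : ℝ))
    have hLv : L.verts.Finite := hG.subset hL.1
    rw [og_rdd_eq R L hLv]
    have ha : ((L.edgeSet \ {e : Sym2 W | ∀ x ∈ e, x ∈ R}).ncard : ℝ) ≤
        (G.edgeSet.ncard : ℝ) := by
      exact_mod_cast Set.ncard_le_ncard
        ((Set.diff_subset).trans (SimpleGraph.Subgraph.edgeSet_mono hL))
        (og_edgeSet_finite hG)
    rcases Nat.eq_zero_or_pos (L.verts \ R).ncard with h0 | h0
    · rw [h0]
      simp only [Nat.cast_zero, div_zero]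
      positivity
    · have h1 : (1 : ℝ) ≤ ((L.verts \ R).ncard : ℝ) := by exact_mod_cast h0
      calc ((L.edgeSet \ {e : Sym2 W | ∀ x ∈ e, x ∈ R}).ncard : ℝ) /
            ((L.verts \ R).ncard : ℝ)
          ≤ ((L.edgeSet \ {e : Sym2 W | ∀ x ∈ e, x ∈ R}).ncard : ℝ) :=
            div_le_self (by positivity) h1
        _ ≤ _ := ha
  exact le_ciSup hbdd ⟨K, hK⟩

private lemma og_mRooted_le (R : Set W) (G : Sub W) (d : ℝ)
    (h : ∀ K : Sub W, K ≤ G → rdd R K ≤ d) : mRooted R G ≤ d := by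
  have : Nonempty {H : Sub W // H ≤ G} := ⟨⟨⊥, bot_le⟩⟩
  exact ciSup_le fun K => h K.1 K.2

private lemma og_nr_empty (R : Set W) (K : Sub W) (h : K.verts ⊆ R) :
    K.edgeSet \ {e : Sym2 W | ∀ x ∈ e, x ∈ R} = ∅ := by
  ext e
  simp only [Set.mem_diff, Set.mem_setOf_eq, Set.mem_empty_iff_false, iff_false, not_and,
    not_not]
  induction e using Sym2.ind with
  | _ x y =>
    intro he z hz
    have hadj : K.Adj x y := he
    rcases Sym2.mem_iff.mp hz with rfl | rfl
    · exact h hadj.fst_mem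
    · exact h hadj.snd_mem

private lemma og_parts_bound {a1 b1 : ℕ} {d : ℝ} (hd : 0 ≤ d)
    (hle : (a1 : ℝ) / (b1 : ℝ) ≤ d) (hz : b1 = 0 → a1 = 0) :
    (a1 : ℝ) ≤ d * (b1 : ℝ) := by
  rcases Nat.eq_zero_or_pos b1 with h | h
  · simp [hz h, h]
  · have hb : (0 : ℝ) < (b1 : ℝ) := by exact_mod_cast h
    calc (a1 : ℝ) = ((a1 : ℝ) / (b1 : ℝ)) * (b1 : ℝ) := by field_simp
      _ ≤ d * (b1 : ℝ) := mul_le_mul_of_nonneg_right hle hb.le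

private lemma og_div_le_of_parts {d a1 a2 b1 b2 : ℝ} (hd : 0 ≤ d) (hb1 : 0 ≤ b1)
    (hb2 : 0 ≤ b2) (h1 : a1 ≤ d * b1) (h2 : a2 ≤ d * b2) :
    (a1 + a2) / (b1 + b2) ≤ d := by
  rcases eq_or_lt_of_le (add_nonneg hb1 hb2) with h | h
  · rw [← h, div_zero]; exact hd
  · rw [div_le_iff₀ h]; nlinarith

private lemma og_div_eq_of_parts {d a1 a2 b1 b2 : ℝ} (hb1 : 0 ≤ b1) (hb2 : 0 ≤ b2)
    (h1 : a1 / b1 = d) (h2 : a2 / b2 = d) (z1 : b1 = 0 → a1 = 0) (z2 : b2 = 0 → a2 = 0) :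
    (a1 + a2) / (b1 + b2) = d := by
  rcases eq_or_lt_of_le hb1 with hb1' | hb1'
  · have ha1 : a1 = 0 := z1 hb1'.symm
    have hd : d = 0 := by rw [← h1, ha1, zero_div]
    rcases eq_or_lt_of_le hb2 with hb2' | hb2'
    · have ha2 : a2 = 0 := z2 hb2'.symm
      rw [ha1, ha2, hd, add_zero, zero_div]
    · rw [ha1, ← hb1', zero_add, zero_add, h2]
  · have ha1 : a1 = d * b1 := by rw [← h1]; field_simp
    rcases eq_or_lt_of_le hb2 with hb2' | hb2'
    · have ha2 : a2 = 0 := z2 hb2'.symm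
      rw [ha2, ← hb2', add_zero, add_zero, h1]
    · have ha2 : a2 = d * b2 := by rw [← h2]; field_simp
      rw [ha1, ha2, ← mul_add, mul_div_assoc,
        div_self (by positivity), mul_one]

end Stmt13Aux

theorem stmt13 {W : Type} (R : Set W) (G H : Sub W)
    (hGfin : G.verts.Finite) (hHfin : H.verts.Finite)
    (hRG : R ⊆ G.verts) (hRH : R ⊆ H.verts)
    (hagree : ∀ x ∈ R, ∀ y ∈ R, (G.Adj x y ↔ H.Adj x y))
    (hmeet : G.verts ∩ H.verts = R)
    (hbG : BalancedRooted R G) (hbH : BalancedRooted R H)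
    (d : ℝ) (hdG : mRooted R G = d) (hdH : mRooted R H = d) :
    BalancedRooted R (G ⊔ H) ∧ mRooted R (G ⊔ H) = d := by
  classical
  set RE : Set (Sym2 W) := {e : Sym2 W | ∀ x ∈ e, x ∈ R} with hRE
  have hGHv : (G ⊔ H).verts = G.verts ∪ H.verts := SimpleGraph.Subgraph.verts_sup G H
  have hGHfin : (G ⊔ H).verts.Finite := by rw [hGHv]; exact hGfin.union hHfin
  have hdGrdd : rdd R G = d := hbG.symm.trans hdG
  have hdHrdd : rdd R H = d := hbH.symm.trans hdH
  have hd0 : 0 ≤ d := hdGrdd ▸ og_rdd_nonneg R G hGfin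
  -- zero condition
  have zcond : ∀ K : Sub W, K.verts.Finite → (K.verts \ R).ncard = 0 →
      (K.edgeSet \ RE).ncard = 0 := by
    intro K hKfin h0
    have hempty : K.verts \ R = ∅ := (Set.ncard_eq_zero (hKfin.diff)).mp h0
    have hsub : K.verts ⊆ R := Set.diff_eq_empty.mp hempty
    rw [og_nr_empty R K hsub, Set.ncard_empty]
  -- decomposition of edge/vertex sets for K ≤ G ⊔ H
  have decompE : ∀ K : Sub W, K ≤ G ⊔ H →
      K.edgeSet \ RE = ((K ⊓ G).edgeSet \ RE) ∪ ((K ⊓ H).edgeSet \ RE) := by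
    intro K hK
    ext e
    induction e using Sym2.ind with
    | _ x y =>
      simp only [Set.mem_diff, Set.mem_union, SimpleGraph.Subgraph.mem_edgeSet,
        SimpleGraph.Subgraph.inf_adj]
      constructor
      · rintro ⟨hadj, hnr⟩
        have : (G ⊔ H).Adj x y := hK.2 hadj
        rcases (SimpleGraph.Subgraph.sup_adj).mp this with h | h
        · exact Or.inl ⟨⟨hadj, h⟩, hnr⟩
        · exact Or.inr ⟨⟨hadj, h⟩, hnr⟩
      · rintro (⟨⟨hadj, _⟩, hnr⟩ | ⟨⟨hadj, _⟩, hnr⟩) <;> exact ⟨hadj, hnr⟩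
  have disjE : Disjoint (((G : Sub W) ⊓ G).edgeSet \ RE) ((H ⊓ H).edgeSet \ RE) → True :=
    fun _ => trivial
  have decompEdisj : ∀ K : Sub W,
      Disjoint ((K ⊓ G).edgeSet \ RE) ((K ⊓ H).edgeSet \ RE) := by
    intro K
    rw [Set.disjoint_left]
    intro e h1 h2
    induction e using Sym2.ind with
    | _ x y =>
      simp only [Set.mem_diff, SimpleGraph.Subgraph.mem_edgeSet,
        SimpleGraph.Subgraph.inf_adj] at h1 h2
      obtain ⟨⟨_, hG'⟩, hnr⟩ := h1
      obtain ⟨⟨_, hH'⟩, _⟩ := h2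
      apply hnr
      intro z hz
      rcases Sym2.mem_iff.mp hz with rfl | rfl
      · exact hmeet ▸ ⟨hG'.fst_mem, hH'.fst_mem⟩
      · exact hmeet ▸ ⟨hG'.snd_mem, hH'.snd_mem⟩
  have decompV : ∀ K : Sub W, K ≤ G ⊔ H →
      K.verts \ R = ((K ⊓ G).verts \ R) ∪ ((K ⊓ H).verts \ R) := by
    intro K hK
    rw [SimpleGraph.Subgraph.verts_inf, SimpleGraph.Subgraph.verts_inf]
    ext x
    simp only [Set.mem_diff, Set.mem_union, Set.mem_inter_iff]
    constructor
    · rintro ⟨hx, hnr⟩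
      have : x ∈ G.verts ∪ H.verts := hGHv ▸ hK.1 hx
      rcases this with h | h
      · exact Or.inl ⟨⟨hx, h⟩, hnr⟩
      · exact Or.inr ⟨⟨hx, h⟩, hnr⟩
    · rintro (⟨⟨hx, _⟩, hnr⟩ | ⟨⟨hx, _⟩, hnr⟩) <;> exact ⟨hx, hnr⟩
  have decompVdisj : ∀ K : Sub W,
      Disjoint ((K ⊓ G).verts \ R) ((K ⊓ H).verts \ R) := by
    intro K
    rw [SimpleGraph.Subgraph.verts_inf, SimpleGraph.Subgraph.verts_inf, Set.disjoint_left]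
    rintro x ⟨⟨_, hxG⟩, hnr⟩ ⟨⟨_, hxH⟩, _⟩
    exact hnr (hmeet ▸ ⟨hxG, hxH⟩)
  -- the computation of rdd for K ≤ G ⊔ H
  have compute : ∀ K : Sub W, K ≤ G ⊔ H →
      rdd R K = ((((K ⊓ G).edgeSet \ RE).ncard : ℝ) + (((K ⊓ H).edgeSet \ RE).ncard : ℝ)) /
        ((((K ⊓ G).verts \ R).ncard : ℝ) + (((K ⊓ H).verts \ R).ncard : ℝ)) := by
    intro K hK
    have hKfin : K.verts.Finite := hGHfin.subset hK.1
    have hfinG : (K ⊓ G).verts.Finite := hGfin.subset (by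
      rw [SimpleGraph.Subgraph.verts_inf]; exact Set.inter_subset_right)
    have hfinH : (K ⊓ H).verts.Finite := hHfin.subset (by
      rw [SimpleGraph.Subgraph.verts_inf]; exact Set.inter_subset_right)
    rw [og_rdd_eq R K hKfin, decompE K hK, decompV K hK,
      Set.ncard_union_eq (decompEdisj K) ((og_edgeSet_finite hfinG).diff)
        ((og_edgeSet_finite hfinH).diff),
      Set.ncard_union_eq (decompVdisj K) (hfinG.diff) (hfinH.diff)]
    push_cast
    ring_nf
  -- upper bound
  have upper : ∀ K : Sub W, K ≤ G ⊔ H → rdd R K ≤ d := by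
    intro K hK
    have hfinG : (K ⊓ G).verts.Finite := hGfin.subset (by
      rw [SimpleGraph.Subgraph.verts_inf]; exact Set.inter_subset_right)
    have hfinH : (K ⊓ H).verts.Finite := hHfin.subset (by
      rw [SimpleGraph.Subgraph.verts_inf]; exact Set.inter_subset_right)
    rw [compute K hK]
    have h1 : (((K ⊓ G).edgeSet \ RE).ncard : ℝ) ≤ d * (((K ⊓ G).verts \ R).ncard : ℝ) := by
      refine og_parts_bound hd0 ?_ (zcond _ hfinG)
      have := og_rdd_le_mRooted R G hGfin (inf_le_right : K ⊓ G ≤ G)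
      rw [og_rdd_eq R (K ⊓ G) hfinG] at this
      rw [hdG] at this
      exact this
    have h2 : (((K ⊓ H).edgeSet \ RE).ncard : ℝ) ≤ d * (((K ⊓ H).verts \ R).ncard : ℝ) := by
      refine og_parts_bound hd0 ?_ (zcond _ hfinH)
      have := og_rdd_le_mRooted R H hHfin (inf_le_right : K ⊓ H ≤ H)
      rw [og_rdd_eq R (K ⊓ H) hfinH] at this
      rw [hdH] at this
      exact this
    exact og_div_le_of_parts hd0 (by positivity) (by positivity) h1 h2
  -- rdd of the union equals d
  have hinfG : (G ⊔ H) ⊓ G = G := inf_eq_right.mpr le_sup_left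
  have hinfH : (G ⊔ H) ⊓ H = H := inf_eq_right.mpr le_sup_right
  have hrddGH : rdd R (G ⊔ H) = d := by
    rw [compute (G ⊔ H) le_rfl, hinfG, hinfH]
    refine og_div_eq_of_parts (by positivity) (by positivity) ?_ ?_ ?_ ?_
    · rw [← og_rdd_eq R G hGfin]; exact hdGrdd
    · rw [← og_rdd_eq R H hHfin]; exact hdHrdd
    · intro h0
      have : ((G.verts \ R).ncard : ℕ) = 0 := by exact_mod_cast h0
      exact_mod_cast zcond G hGfin this
    · intro h0
      have : ((H.verts \ R).ncard : ℕ) = 0 := by exact_mod_cast h0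
      exact_mod_cast zcond H hHfin this
  have hle : mRooted R (G ⊔ H) ≤ d := og_mRooted_le R (G ⊔ H) d upper
  have hge : d ≤ mRooted R (G ⊔ H) := by
    rw [← hrddGH]
    exact og_rdd_le_mRooted R (G ⊔ H) hGHfin le_rfl
  have hm : mRooted R (G ⊔ H) = d := le_antisymm hle hge
  exact ⟨hm.trans hrddGH.symm, hm⟩


end OG
end
end

section
/- Let (R,G) be a rooted graph and let (e,H) be a rooted graph whose two roots form an edge e of H. Suppose (e,H) is balanced and that for some t > 0 both m₁(H − e) ≤ t and (v_H − 2) − (e_H − 1)/t ≥ −1/m(R,G) hold. Then m(R, (R,G)×(e,H−e)) ≤ t. -/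
open Filter Asymptotics
open scoped Classical ENNReal

noncomputable section

namespace OG

variable {W U X : Type*}

variable {ι : Type*} [Fintype ι]

/-! ### Auxiliary lemmas for stmt14 -/

section Aux

lemma mem_verts_of_edge (G : Sub W) {e} (he : e ∈ G.edgeSet) : ∀ x ∈ e, x ∈ G.verts := by
  induction e with
  | _ a b =>
    intro x hx
    rw [Sym2.mem_iff] at hx
    rw [SimpleGraph.Subgraph.mem_edgeSet] at he
    rcases hx with h | h <;> subst h
    · exact G.edge_vert he
    · exact G.edge_vert he.symm

lemma edgeSet_finite (G : Sub W) (h : G.verts.Finite) : G.edgeSet.Finite := by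
  apply Set.Finite.subset (Set.Finite.image (fun p : W × W => s(p.1, p.2)) (h.prod h))
  intro e he
  induction e with
  | _ a b => exact ⟨(a,b), ⟨G.edge_vert he, G.edge_vert (G.adj_symm he)⟩, rfl⟩

lemma subgraphs_finite (G : Sub W) (h : G.verts.Finite) : Finite {H : Sub W // H ≤ G} := by
  have hfin : Set.Finite ({V | V ⊆ G.verts} ×ˢ {E | E ⊆ G.edgeSet}) :=
    Set.Finite.prod h.finite_subsets (edgeSet_finite G h).finite_subsets
  have : Finite ({V | V ⊆ G.verts} ×ˢ {E | E ⊆ G.edgeSet} : Set (Set W × Set (Sym2 W))) :=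
    hfin
  apply Finite.of_injective (f := fun H : {H : Sub W // H ≤ G} =>
    (⟨⟨H.1.verts, H.1.edgeSet⟩, H.1.verts_mono H.2, SimpleGraph.Subgraph.edgeSet_mono H.2⟩ :
      ({V | V ⊆ G.verts} ×ˢ {E | E ⊆ G.edgeSet} : Set (Set W × Set (Sym2 W)))))
  rintro ⟨H₁, h₁⟩ ⟨H₂, h₂⟩ hEq
  simp only [Subtype.mk.injEq, Prod.mk.injEq] at hEq ⊢
  replace hEq : H₁.verts = H₂.verts ∧ H₁.edgeSet = H₂.edgeSet := Prod.mk.inj (congrArg Subtype.val hEq)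
  refine SimpleGraph.Subgraph.ext hEq.1 ?_
  ext x y
  constructor <;> intro hadj
  · rw [← SimpleGraph.Subgraph.mem_edgeSet] at hadj ⊢; rw [← hEq.2]; exact hadj
  · rw [← SimpleGraph.Subgraph.mem_edgeSet] at hadj ⊢; rw [hEq.2]; exact hadj

lemma le_mRooted (X : Set W) {K G : Sub W} (hfin : G.verts.Finite) (hK : K ≤ G) :
    rdd X K ≤ mRooted X G := by
  have := subgraphs_finite G hfin
  have h := le_ciSup (f := fun H : {H : Sub W // H ≤ G} => rdd X H.1)
    (Set.Finite.bddAbove (Set.finite_range _)) ⟨K, hK⟩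
  exact h

lemma le_m1D {K G : Sub W} (hfin : G.verts.Finite) (hK : K ≤ G) : d1 K ≤ m1D G := by
  have := subgraphs_finite G hfin
  have h := le_ciSup (f := fun H : {H : Sub W // H ≤ G} => d1 H.1)
    (Set.Finite.bddAbove (Set.finite_range _)) ⟨K, hK⟩
  exact h

lemma div_le_of_le_mul' {a b t : ℝ} (ht : 0 < t) (hb : 0 ≤ b) (h : a ≤ t * b) : a / b ≤ t := by
  rcases eq_or_lt_of_le hb with h0 | h0
  · simp [← h0]; exact ht.le
  · rw [div_le_iff₀ h0]; linarith [h]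

lemma ncard_biUnion {α β : Type*} (s : Finset α) (f : α → Set β)
    (hfin : ∀ a ∈ s, (f a).Finite)
    (hdisj : ∀ a ∈ s, ∀ b ∈ s, a ≠ b → Disjoint (f a) (f b)) :
    (⋃ a ∈ s, f a).ncard = ∑ a ∈ s, (f a).ncard := by
  induction s using Finset.induction with
  | empty => simp
  | insert a s hni ih =>
    rw [Finset.sum_insert hni]
    have hU : (⋃ x ∈ insert a s, f x) = f a ∪ ⋃ x ∈ s, f x := by
      simp [Set.biUnion_insert]
    have hd : Disjoint (f a) (⋃ x ∈ s, f x) := by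
      rw [Set.disjoint_iff_inter_eq_empty]
      ext z; simp only [Set.mem_inter_iff, Set.mem_iUnion, Set.mem_empty_iff_false, iff_false]
      rintro ⟨hza, x, hx, hzx⟩
      have := hdisj a (Finset.mem_insert_self a s) x (Finset.mem_insert_of_mem hx)
        (by rintro rfl; exact hni hx)
      exact this.le_bot ⟨hza, hzx⟩
    rw [hU, Set.ncard_union_eq hd (hfin a (Finset.mem_insert_self a s))
      (Set.Finite.biUnion s.finite_toSet (fun x hx => hfin x (Finset.mem_insert_of_mem hx))),
      ih (fun x hx => hfin x (Finset.mem_insert_of_mem hx))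
      (fun x hx y hy hxy => hdisj x (Finset.mem_insert_of_mem hx) y
        (Finset.mem_insert_of_mem hy) hxy)]

lemma sym2_map_injOn {α β : Type*} {f : α → β} {s : Set α} (hf : Set.InjOn f s)
    {e₁ e₂ : Sym2 α} (h₁ : ∀ x ∈ e₁, x ∈ s) (h₂ : ∀ x ∈ e₂, x ∈ s)
    (h : Sym2.map f e₁ = Sym2.map f e₂) : e₁ = e₂ := by
  induction e₁ with
  | _ a b =>
    induction e₂ with
    | _ c d =>
      simp only [Sym2.map_pair_eq, Sym2.eq_iff] at h ⊢
      have ha := h₁ a (by simp); have hb := h₁ b (by simp)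
      have hc := h₂ c (by simp); have hd := h₂ d (by simp)
      rcases h with ⟨h1, h2⟩ | ⟨h1, h2⟩
      · exact Or.inl ⟨hf ha hc h1, hf hb hd h2⟩
      · exact Or.inr ⟨hf ha hd h1, hf hb hc h2⟩

/-- pull back a subgraph along a map. -/
def pullback (H' : Sub W) (Q : Sub X) (g : W → X) : Sub W where
  verts := {h | h ∈ H'.verts ∧ g h ∈ Q.verts}
  Adj a b := H'.Adj a b ∧ Q.Adj (g a) (g b)
  adj_sub := @fun a b h => H'.adj_sub h.1
  edge_vert := @fun a b h => ⟨H'.edge_vert h.1, Q.edge_vert h.2⟩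
  symm := ⟨fun a b h => ⟨H'.adj_symm h.1, Q.adj_symm h.2⟩⟩

lemma pullback_le (H' : Sub W) (Q : Sub X) (g : W → X) : pullback H' Q g ≤ H' :=
  ⟨fun _ hp => And.left hp, @fun a b h => And.left h⟩

/-- select a sub-subgraph by an edge predicate. -/
def selSub (G : Sub W) (E : Set (Sym2 W)) (V : Set W) (hVG : V ⊆ G.verts)
    (hE : ∀ ⦃a b⦄, G.Adj a b → s(a, b) ∈ E → a ∈ V) : Sub W where
  verts := V
  Adj a b := G.Adj a b ∧ s(a, b) ∈ E
  adj_sub := @fun a b h => G.adj_sub h.1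
  edge_vert := @fun a b h => hE h.1 h.2
  symm := ⟨fun a b h => ⟨G.adj_symm h.1, by rw [Sym2.eq_swap]; exact h.2⟩⟩

lemma selSub_le (G : Sub W) (E : Set (Sym2 W)) (V : Set W) (hVG : V ⊆ G.verts)
    (hE : ∀ ⦃a b⦄, G.Adj a b → s(a, b) ∈ E → a ∈ V) : selSub G E V hVG hE ≤ G :=
  ⟨fun x hx => hVG hx, @fun a b h => And.left h⟩

lemma selSub_edgeSet (G : Sub W) (E : Set (Sym2 W)) (V : Set W) (hVG : V ⊆ G.verts)
    (hE : ∀ ⦃a b⦄, G.Adj a b → s(a, b) ∈ E → a ∈ V) (hEG : E ⊆ G.edgeSet) :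
    (selSub G E V hVG hE).edgeSet = E := by
  ext e
  induction e with
  | _ a b =>
    simp only [SimpleGraph.Subgraph.mem_edgeSet]
    constructor
    · intro h; exact And.right h
    · intro h; exact And.intro (SimpleGraph.Subgraph.mem_edgeSet.mp (hEG h)) h

end Aux

set_option maxHeartbeats 1000000 in
theorem stmt14 (G : Sub ℕ) (R : Set ℕ) (hGfin : G.verts.Finite) (hR : R ⊆ G.verts)
    (H : Sub ℕ) (hHfin : H.verts.Finite) (h₁ h₂ : ℕ) (hadj : H.Adj h₁ h₂)
    (hbal : BalancedRooted {h₁, h₂} H)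
    (t : ℝ) (ht : 0 < t)
    (hm1 : m1D (H.deleteEdges {s(h₁, h₂)}) ≤ t)
    (hineq : -(1 / mRooted R G) ≤ ((nverts H : ℝ) - 2) - ((nedges H : ℝ) - 1) / t)
    (P : Sub ℕ) (hPfin : P.verts.Finite) (φ : ℕ → ℕ)
    (hP : IsProdCopy G R (H.deleteEdges {s(h₁, h₂)}) h₁ h₂ P φ) :
    mRooted (φ '' R) P ≤ t := by
  classical
  obtain ⟨ψ, c1, c2, c3, c4, c5, c6, c7⟩ := hP
  simp only [SimpleGraph.Subgraph.deleteEdges_verts] at c2 c4 c5 c6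
  have hh12 : h₁ ≠ h₂ := by
    have h := H.adj_sub hadj; simpa using h
  have hh1v : h₁ ∈ H.verts := H.edge_vert hadj
  have hh2v : h₂ ∈ H.verts := H.edge_vert (H.adj_symm hadj)
  have hφRG : φ '' R ⊆ φ '' G.verts := Set.image_mono hR
  have hNRsub : {e | NRe G R e} ⊆ G.edgeSet := fun e he => he.1
  have hNRfin : {e | NRe G R e}.Finite := (edgeSet_finite G hGfin).subset hNRsub
  set NRf : Finset (Sym2 ℕ) := hNRfin.toFinset with hNRfdef
  have hNRmem : ∀ {e : Sym2 ℕ}, e ∈ NRf ↔ NRe G R e := fun {e} => hNRfin.mem_toFinset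
  set H' : Sub ℕ := H.deleteEdges {s(h₁, h₂)} with hH'def
  have hH'le : H' ≤ H := SimpleGraph.Subgraph.deleteEdges_le _
  have hH'vfin : H'.verts.Finite := by
    rw [hH'def, SimpleGraph.Subgraph.deleteEdges_verts]; exact hHfin
  have hH'nr : ∀ {a b : ℕ}, H'.Adj a b →
      ¬(a ∈ ({h₁, h₂} : Set ℕ) ∧ b ∈ ({h₁, h₂} : Set ℕ)) := by
    rintro a b hab ⟨ha, hb⟩
    have hne : a ≠ b := by have h := H'.adj_sub hab; simpa using h
    rw [hH'def, SimpleGraph.Subgraph.deleteEdges_adj] at hab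
    simp only [Set.mem_insert_iff, Set.mem_singleton_iff] at ha hb
    rcases ha with rfl | rfl <;> rcases hb with rfl | rfl
    · exact hne rfl
    · exact hab.2 (by simp)
    · exact hab.2 (by rw [Sym2.eq_swap]; simp)
    · exact hne rfl
  have hNEP : Nonempty {H : Sub ℕ // H ≤ P} := ⟨⟨⊥, bot_le⟩⟩
  show (⨆ H : {H : Sub ℕ // H ≤ P}, rdd (φ '' R) H.1) ≤ t
  refine ciSup_le ?_
  rintro ⟨Q, hQ⟩
  show rdd (φ '' R) Q ≤ t
  have hQv : Q.verts ⊆ P.verts := hQ.1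
  have hQvfin : Q.verts.Finite := hPfin.subset hQv
  have hQefin : Q.edgeSet.Finite := edgeSet_finite Q hQvfin
  set K : Sym2 ℕ → Sub ℕ := fun e => pullback H' Q (ψ e) with hKdef
  have hKadj : ∀ {e a b}, (K e).Adj a b ↔ H'.Adj a b ∧ Q.Adj (ψ e a) (ψ e b) :=
    fun {e a b} => Iff.rfl
  have hKvmem : ∀ {e h}, h ∈ (K e).verts ↔ h ∈ H.verts ∧ ψ e h ∈ Q.verts :=
    fun {e h} => Iff.rfl
  have hKleH' : ∀ e, K e ≤ H' := fun e => pullback_le _ _ _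
  have hKleH : ∀ e, K e ≤ H := fun e => le_trans (hKleH' e) hH'le
  have hKvH : ∀ e, (K e).verts ⊆ H.verts := fun e x hx => (hKvmem.mp hx).1
  have hKvfin : ∀ e, (K e).verts.Finite := fun e => hHfin.subset (hKvH e)
  have hKefin : ∀ e, (K e).edgeSet.Finite := fun e => edgeSet_finite _ (hKvfin e)
  set ι : Sym2 ℕ → ℕ := fun e => ((K e).verts \ {h₁, h₂}).ncard with hιdef
  set ε : Sym2 ℕ → ℕ := fun e => nedges (K e) with hεdef
  -- the part of Q inside copy e, vertices
  have hQIe : ∀ e, Q.verts ∩ ψ e '' (H.verts \ {h₁, h₂}) =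
      ψ e '' ((K e).verts \ {h₁, h₂}) := by
    intro e
    ext q
    simp only [Set.mem_inter_iff, Set.mem_image, Set.mem_diff]
    constructor
    · rintro ⟨hqQ, h, ⟨hhH, hh12'⟩, rfl⟩
      exact ⟨h, ⟨hKvmem.mpr ⟨hhH, hqQ⟩, hh12'⟩, rfl⟩
    · rintro ⟨h, ⟨hhK, hh12'⟩, rfl⟩
      exact ⟨(hKvmem.mp hhK).2, h, ⟨(hKvmem.mp hhK).1, hh12'⟩, rfl⟩
  have hιIe : ∀ e, NRe G R e → (Q.verts ∩ ψ e '' (H.verts \ {h₁, h₂})).ncard = ι e := by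
    intro e he
    rw [hQIe e]
    simp only [hιdef]
    exact Set.ncard_image_of_injOn ((c2 e he).mono (fun x hx => hKvH e hx.1))
  -- copies are contained in internal part ∪ image of φ
  have hcopysub : ∀ e, NRe G R e →
      ψ e '' H.verts ⊆ ψ e '' (H.verts \ {h₁, h₂}) ∪ φ '' G.verts := by
    intro e
    induction e with
    | _ x y =>
      rintro he q ⟨h, hh, rfl⟩
      by_cases hroot : h ∈ ({h₁, h₂} : Set ℕ)
      · right
        have hc3 := c3 _ he x y rfl
        have hGxy : G.Adj x y := SimpleGraph.Subgraph.mem_edgeSet.mp he.1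
        have hx : x ∈ G.verts := G.edge_vert hGxy
        have hy : y ∈ G.verts := G.edge_vert (G.adj_symm hGxy)
        have hmem : ψ (s(x, y)) h ∈ ({φ x, φ y} : Set ℕ) := by
          rw [← hc3]
          simp only [Set.mem_insert_iff, Set.mem_singleton_iff] at hroot
          rcases hroot with rfl | rfl
          · exact Set.mem_insert _ _
          · exact Set.mem_insert_of_mem _ rfl
        simp only [Set.mem_insert_iff, Set.mem_singleton_iff] at hmem
        rcases hmem with h' | h'
        · exact ⟨x, hx, h'.symm⟩
        · exact ⟨y, hy, h'.symm⟩
      · left; exact ⟨h, ⟨hh, hroot⟩, rfl⟩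
  -- Vertex decomposition
  have hQdecomp : Q.verts = (Q.verts ∩ φ '' G.verts) ∪
      ⋃ e ∈ NRf, Q.verts ∩ ψ e '' (H.verts \ {h₁, h₂}) := by
    apply Set.Subset.antisymm
    · intro q hq
      have hqP := hQv hq
      rw [c6] at hqP
      rcases hqP with hqφ | hqI
      · left; exact ⟨hq, hqφ⟩
      · simp only [Set.mem_iUnion, Set.mem_setOf_eq, exists_prop] at hqI
        obtain ⟨e, he, hqe⟩ := hqI
        rcases hcopysub e he hqe with hin | hφ'
        · right
          simp only [Set.mem_iUnion, exists_prop]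
          exact ⟨e, hNRmem.mpr he, hq, hin⟩
        · left; exact ⟨hq, hφ'⟩
    · intro q hq
      rcases hq with ⟨hq, -⟩ | hq
      · exact hq
      · simp only [Set.mem_iUnion, exists_prop] at hq
        obtain ⟨e, -, hq, -⟩ := hq
        exact hq
  have hvQnat : nverts Q = (Q.verts ∩ φ '' G.verts).ncard + ∑ e ∈ NRf, ι e := by
    have hd : Disjoint (Q.verts ∩ φ '' G.verts)
        (⋃ e ∈ NRf, Q.verts ∩ ψ e '' (H.verts \ {h₁, h₂})) := by
      simp only [Set.disjoint_iUnion_right]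
      intro e he
      exact Disjoint.mono Set.inter_subset_right Set.inter_subset_right
        (c5 e (hNRmem.mp he)).symm
    have h0 : nverts Q = (Q.verts ∩ φ '' G.verts ∪
        ⋃ e ∈ NRf, Q.verts ∩ ψ e '' (H.verts \ {h₁, h₂})).ncard :=
      congrArg Set.ncard hQdecomp
    rw [h0, Set.ncard_union_eq hd
      (hQvfin.subset Set.inter_subset_left)
      (Set.Finite.biUnion NRf.finite_toSet
        (fun e _ => hQvfin.subset Set.inter_subset_left)),
      ncard_biUnion NRf _ (fun e _ => hQvfin.subset Set.inter_subset_left)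
      (fun e he f hf hne => Disjoint.mono Set.inter_subset_right Set.inter_subset_right
        (c4 e f (hNRmem.mp he) (hNRmem.mp hf) hne))]
    congr 1
    exact Finset.sum_congr rfl (fun e he => hιIe e (hNRmem.mp he))
  -- split the φ-part by roots
  have hAsplit : (Q.verts ∩ φ '' G.verts).ncard =
      (Q.verts ∩ φ '' R).ncard + ((Q.verts ∩ φ '' G.verts) \ φ '' R).ncard := by
    have h1 : (Q.verts ∩ φ '' G.verts) ∩ φ '' R = Q.verts ∩ φ '' R := by
      ext q; constructor
      · rintro ⟨⟨hq, -⟩, hr⟩; exact ⟨hq, hr⟩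
      · rintro ⟨hq, hr⟩; exact ⟨⟨hq, hφRG hr⟩, hr⟩
    rw [← h1]
    exact (Set.ncard_inter_add_ncard_diff_eq_ncard _ _
      (hQvfin.subset Set.inter_subset_left)).symm
  -- Edge decomposition
  have hUsubQ : ∀ e, Sym2.map (ψ e) '' (K e).edgeSet ⊆ Q.edgeSet := by
    intro e s hs
    obtain ⟨s₀, hs₀, rfl⟩ := hs
    revert hs₀
    induction s₀ with
    | _ p q =>
      intro hs₀
      rw [Sym2.map_pair_eq, SimpleGraph.Subgraph.mem_edgeSet]
      exact (hKadj.mp (SimpleGraph.Subgraph.mem_edgeSet.mp hs₀)).2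
  have hwit : ∀ e s, s ∈ (K e).edgeSet →
      ∃ z, z ∈ s ∧ z ∈ (K e).verts ∧ z ∉ ({h₁, h₂} : Set ℕ) := by
    intro e s
    induction s with
    | _ p q =>
      intro hs
      have hadj' := SimpleGraph.Subgraph.mem_edgeSet.mp hs
      have hH'a : H'.Adj p q := (hKadj.mp hadj').1
      have hno := hH'nr hH'a
      rw [not_and_or] at hno
      rcases hno with hp | hq
      · exact ⟨p, Sym2.mem_iff.mpr (Or.inl rfl), (K e).edge_vert hadj', hp⟩
      · exact ⟨q, Sym2.mem_iff.mpr (Or.inr rfl), (K e).edge_vert ((K e).adj_symm hadj'), hq⟩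
  have hUnotroot : ∀ e, NRe G R e → ∀ s ∈ Sym2.map (ψ e) '' (K e).edgeSet,
      ¬ ∀ x ∈ s, x ∈ φ '' R := by
    rintro e he s ⟨s₀, hs₀, rfl⟩ hall
    obtain ⟨z, hzs, hzK, hz12⟩ := hwit e s₀ hs₀
    have hzIm : ψ e z ∈ Sym2.map (ψ e) s₀ := Sym2.mem_map.mpr ⟨z, hzs, rfl⟩
    have hzφ : ψ e z ∈ φ '' R := hall _ hzIm
    have hIn : ψ e z ∈ ψ e '' (H.verts \ {h₁, h₂}) := ⟨z, ⟨(hKvmem.mp hzK).1, hz12⟩, rfl⟩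
    exact Set.disjoint_left.mp (c5 e he) hIn (hφRG hzφ)
  have hUdisj : ∀ e e', NRe G R e → NRe G R e' → e ≠ e' →
      Disjoint (Sym2.map (ψ e) '' (K e).edgeSet) (Sym2.map (ψ e') '' (K e').edgeSet) := by
    intro e e' he he' hne
    rw [Set.disjoint_left]
    rintro s ⟨s₀, hs₀, rfl⟩ ⟨s₁, hs₁, heq⟩
    obtain ⟨z, hzs, hzK, hz12⟩ := hwit e s₀ hs₀
    have hzmem : ψ e z ∈ Sym2.map (ψ e') s₁ := by
      rw [heq]; exact Sym2.mem_map.mpr ⟨z, hzs, rfl⟩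
    obtain ⟨w, hws, hwz⟩ := Sym2.mem_map.mp hzmem
    have hwH : w ∈ H.verts := hKvH e' (mem_verts_of_edge (K e') hs₁ w hws)
    have hIn : ψ e z ∈ ψ e '' (H.verts \ {h₁, h₂}) := ⟨z, ⟨(hKvmem.mp hzK).1, hz12⟩, rfl⟩
    have hIn' : ψ e z ∈ ψ e' '' H.verts := ⟨w, hwH, hwz⟩
    rcases hcopysub e' he' hIn' with h2 | h2
    · exact Set.disjoint_left.mp (c4 e e' he he' hne) hIn h2
    · exact Set.disjoint_left.mp (c5 e he) hIn h2
  have hEdecomp : Q.edgeSet = {s | s ∈ Q.edgeSet ∧ ∀ x ∈ s, x ∈ φ '' R} ∪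
      ⋃ e ∈ NRf, Sym2.map (ψ e) '' (K e).edgeSet := by
    apply Set.Subset.antisymm
    · intro s hs
      have hsP : s ∈ P.edgeSet := SimpleGraph.Subgraph.edgeSet_mono hQ hs
      revert hs hsP
      induction s with
      | _ u v =>
        intro hs hsP
        have hPadj := SimpleGraph.Subgraph.mem_edgeSet.mp hsP
        rcases (c7 u v).mp hPadj with ⟨p, q, hpq, hpR, hqR, rfl, rfl⟩ |
          ⟨e, he, p, q, hpq', rfl, rfl⟩
        · left
          refine ⟨hs, ?_⟩
          intro x hx
          rcases Sym2.mem_iff.mp hx with rfl | rfl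
          · exact ⟨p, hpR, rfl⟩
          · exact ⟨q, hqR, rfl⟩
        · right
          simp only [Set.mem_iUnion, exists_prop]
          refine ⟨e, hNRmem.mpr he, s(p, q), ?_, by rw [Sym2.map_pair_eq]⟩
          rw [SimpleGraph.Subgraph.mem_edgeSet]
          exact hKadj.mpr ⟨hpq', SimpleGraph.Subgraph.mem_edgeSet.mp hs⟩
    · intro s hs
      rcases hs with ⟨hs, -⟩ | hs
      · exact hs
      · simp only [Set.mem_iUnion, exists_prop] at hs
        obtain ⟨e, -, hse⟩ := hs
        exact hUsubQ e hse
  have heQnat : nedges Q = rInEdges (φ '' R) Q + ∑ e ∈ NRf, ε e := by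
    have hd : Disjoint {s | s ∈ Q.edgeSet ∧ ∀ x ∈ s, x ∈ φ '' R}
        (⋃ e ∈ NRf, Sym2.map (ψ e) '' (K e).edgeSet) := by
      simp only [Set.disjoint_iUnion_right]
      intro e he
      rw [Set.disjoint_left]
      intro s hsR hsU
      exact hUnotroot e (hNRmem.mp he) s hsU hsR.2
    have hcard : ∀ e ∈ NRf, (Sym2.map (ψ e) '' (K e).edgeSet).ncard = ε e := by
      intro e he
      have hinj : Set.InjOn (Sym2.map (ψ e)) (K e).edgeSet := fun s hs s' hs' h =>
        sym2_map_injOn (c2 e (hNRmem.mp he))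
          (fun x hx => hKvH e (mem_verts_of_edge (K e) hs x hx))
          (fun x hx => hKvH e (mem_verts_of_edge (K e) hs' x hx)) h
      rw [Set.ncard_image_of_injOn hinj]
      simp only [hεdef]
      rfl
    have h0 : nedges Q = ({s | s ∈ Q.edgeSet ∧ ∀ x ∈ s, x ∈ φ '' R} ∪
        ⋃ e ∈ NRf, Sym2.map (ψ e) '' (K e).edgeSet).ncard :=
      congrArg Set.ncard hEdecomp
    rw [h0, Set.ncard_union_eq hd
      (hQefin.subset (fun s hs => hs.1))
      (Set.Finite.biUnion NRf.finite_toSet (fun e _ => hQefin.subset (hUsubQ e))),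
      ncard_biUnion NRf _ (fun e _ => hQefin.subset (hUsubQ e))
      (fun e he f hf hne => hUdisj e f (hNRmem.mp he) (hNRmem.mp hf) hne)]
    congr 1
    exact Finset.sum_congr rfl hcard
  -- per-copy vertex count split
  have hvKnat : ∀ e, nverts (K e) = ((K e).verts ∩ {h₁, h₂}).ncard + ι e := by
    intro e
    simp only [hιdef]
    exact (Set.ncard_inter_add_ncard_diff_eq_ncard _ _ (hKvfin e)).symm
  -- bound for copies not having both roots (or no edges)
  have hB1 : ∀ e ∈ NRf, ¬(1 ≤ ε e ∧ h₁ ∈ (K e).verts ∧ h₂ ∈ (K e).verts) →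
      (ε e : ℝ) ≤ t * (ι e : ℝ) := by
    intro e heNR hnot
    by_cases hε0 : ε e = 0
    · rw [hε0]; push_cast; exact mul_nonneg ht.le (Nat.cast_nonneg _)
    · have hε1 : 1 ≤ ε e := Nat.one_le_iff_ne_zero.mpr hε0
      have hroots : ¬(h₁ ∈ (K e).verts ∧ h₂ ∈ (K e).verts) := fun h => hnot ⟨hε1, h⟩
      have hne : (K e).edgeSet.Nonempty := by
        apply Set.nonempty_of_ncard_ne_zero
        simp only [hεdef] at hε0
        exact hε0
      have h2v : ∃ p q : ℕ, p ≠ q ∧ p ∈ (K e).verts ∧ q ∈ (K e).verts := by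
        obtain ⟨s, hs⟩ := hne
        revert hs
        induction s with
        | _ p q =>
          intro hs
          have ha := SimpleGraph.Subgraph.mem_edgeSet.mp hs
          have hne' : p ≠ q := by have h := (K e).adj_sub ha; simpa using h
          exact ⟨p, q, hne', (K e).edge_vert ha, (K e).edge_vert ((K e).adj_symm ha)⟩
      obtain ⟨p, q, hpq, hpK, hqK⟩ := h2v
      have h2le : 2 ≤ nverts (K e) := by
        have h1lt : 1 < (K e).verts.ncard :=
          (Set.one_lt_ncard (hKvfin e)).mpr ⟨p, hpK, q, hqK, hpq⟩
        have : nverts (K e) = (K e).verts.ncard := rfl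
        omega
      have hρ1 : ((K e).verts ∩ {h₁, h₂}).ncard ≤ 1 := by
        rw [not_and_or] at hroots
        rcases hroots with h1n | h2n
        · have hsub : (K e).verts ∩ {h₁, h₂} ⊆ {h₂} := by
            rintro x ⟨hxK, hx⟩
            simp only [Set.mem_insert_iff, Set.mem_singleton_iff] at hx ⊢
            rcases hx with rfl | rfl
            · exact absurd hxK h1n
            · rfl
          calc ((K e).verts ∩ {h₁, h₂}).ncard ≤ ({h₂} : Set ℕ).ncard :=
                Set.ncard_le_ncard hsub (Set.finite_singleton _)
            _ = 1 := Set.ncard_singleton _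
        · have hsub : (K e).verts ∩ {h₁, h₂} ⊆ {h₁} := by
            rintro x ⟨hxK, hx⟩
            simp only [Set.mem_insert_iff, Set.mem_singleton_iff] at hx ⊢
            rcases hx with rfl | rfl
            · rfl
            · exact absurd hxK h2n
          calc ((K e).verts ∩ {h₁, h₂}).ncard ≤ ({h₁} : Set ℕ).ncard :=
                Set.ncard_le_ncard hsub (Set.finite_singleton _)
            _ = 1 := Set.ncard_singleton _
      have hd1 : d1 (K e) ≤ t := le_trans (le_m1D hH'vfin (hKleH' e)) hm1
      have h2r : (2 : ℝ) ≤ (nverts (K e) : ℝ) := by exact_mod_cast h2le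
      have hεle : (ε e : ℝ) ≤ t * ((nverts (K e) : ℝ) - 1) := by
        have hdd : d1 (K e) = (ε e : ℝ) / ((nverts (K e) : ℝ) - 1) := by
          simp only [hεdef]; rfl
        rw [hdd] at hd1
        rwa [div_le_iff₀ (by linarith : (0:ℝ) < (nverts (K e) : ℝ) - 1)] at hd1
      have hvι : (nverts (K e) : ℝ) - 1 ≤ (ι e : ℝ) := by
        have hc1' : (nverts (K e) : ℝ) =
            (((K e).verts ∩ {h₁, h₂}).ncard : ℝ) + (ι e : ℝ) := by
          exact_mod_cast hvKnat e
        have hc2' : (((K e).verts ∩ {h₁, h₂}).ncard : ℝ) ≤ 1 := by exact_mod_cast hρ1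
        linarith
      calc (ε e : ℝ) ≤ t * ((nverts (K e) : ℝ) - 1) := hεle
        _ ≤ t * (ι e : ℝ) := mul_le_mul_of_nonneg_left hvι ht.le
  -- density of (e,H)
  have hrInH : rInEdges {h₁, h₂} H = 1 := by
    have hset : {e ∈ H.edgeSet | ∀ x ∈ e, x ∈ ({h₁, h₂} : Set ℕ)} = {s(h₁, h₂)} := by
      apply Set.Subset.antisymm
      · intro s
        induction s with
        | _ a b =>
          rintro ⟨hsH, hall⟩
          have ha := hall a (Sym2.mem_iff.mpr (Or.inl rfl))
          have hb := hall b (Sym2.mem_iff.mpr (Or.inr rfl))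
          have hne : a ≠ b := by
            have h := H.adj_sub (SimpleGraph.Subgraph.mem_edgeSet.mp hsH); simpa using h
          simp only [Set.mem_insert_iff, Set.mem_singleton_iff] at ha hb
          simp only [Set.mem_singleton_iff, Sym2.eq_iff]
          rcases ha with rfl | rfl <;> rcases hb with rfl | rfl
          · exact absurd rfl hne
          · exact Or.inl ⟨rfl, rfl⟩
          · exact Or.inr ⟨rfl, rfl⟩
          · exact absurd rfl hne
      · intro s hs
        rw [Set.mem_singleton_iff] at hs
        subst hs
        refine ⟨SimpleGraph.Subgraph.mem_edgeSet.mpr hadj, ?_⟩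
        intro x hx
        rcases Sym2.mem_iff.mp hx with rfl | rfl
        · exact Set.mem_insert _ _
        · exact Set.mem_insert_of_mem _ rfl
    unfold rInEdges
    rw [hset, Set.ncard_singleton]
  have hHvroots : (H.verts ∩ {h₁, h₂}).ncard = 2 := by
    have hsub : ({h₁, h₂} : Set ℕ) ⊆ H.verts := by
      intro x hx
      simp only [Set.mem_insert_iff, Set.mem_singleton_iff] at hx
      rcases hx with rfl | rfl
      · exact hh1v
      · exact hh2v
    rw [Set.inter_eq_self_of_subset_right hsub, Set.ncard_pair hh12]
  have hrddH : rdd {h₁, h₂} H = ((nedges H : ℝ) - 1) / ((nverts H : ℝ) - 2) := by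
    unfold rdd
    rw [hrInH, hHvroots]
    norm_num
  have hvH2 : 2 ≤ nverts H := by
    have hsub : ({h₁, h₂} : Set ℕ) ⊆ H.verts := by
      intro x hx
      simp only [Set.mem_insert_iff, Set.mem_singleton_iff] at hx
      rcases hx with rfl | rfl
      · exact hh1v
      · exact hh2v
    have h1 : ({h₁, h₂} : Set ℕ).ncard ≤ H.verts.ncard := Set.ncard_le_ncard hsub hHfin
    rwa [Set.ncard_pair hh12] at h1
  have hιleD : ∀ e, (ι e : ℝ) ≤ (nverts H : ℝ) - 2 := by
    intro e
    have h1 : ι e ≤ (H.verts \ {h₁, h₂}).ncard := by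
      simp only [hιdef]
      exact Set.ncard_le_ncard (Set.diff_subset_diff_left (hKvH e)) hHfin.diff
    have h2 : (H.verts \ {h₁, h₂}).ncard = nverts H - 2 := by
      have hsub : ({h₁, h₂} : Set ℕ) ⊆ H.verts := by
        intro x hx
        simp only [Set.mem_insert_iff, Set.mem_singleton_iff] at hx
        rcases hx with rfl | rfl
        · exact hh1v
        · exact hh2v
      rw [Set.ncard_diff hsub (Set.toFinite _), Set.ncard_pair hh12]
      rfl
    have h4 : ι e + 2 ≤ nverts H := by omega
    have h5 : (ι e : ℝ) + 2 ≤ (nverts H : ℝ) := by exact_mod_cast h4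
    linarith
  -- bound for copies having both roots and an edge
  have hB2 : ∀ e ∈ NRf, 1 ≤ ε e → h₁ ∈ (K e).verts → h₂ ∈ (K e).verts →
      0 < mRooted R G →
      (ε e : ℝ) ≤ t * (ι e : ℝ) + t / mRooted R G := by
    intro e heNR hε1 hK1 hK2 hμ
    have hne : (K e).edgeSet.Nonempty := by
      apply Set.nonempty_of_ncard_ne_zero
      have : ε e ≠ 0 := by omega
      simp only [hεdef] at this
      exact this
    obtain ⟨s, hs⟩ := hne
    obtain ⟨z, hzs, hzK, hz12⟩ := hwit e s hs
    have hι1 : 1 ≤ ι e := by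
      simp only [hιdef]
      have hne' : ((K e).verts \ {h₁, h₂}).Nonempty := ⟨z, hzK, hz12⟩
      exact (Set.ncard_pos (hKvfin e).diff).mpr hne'
    have hKroots : ((K e).verts ∩ {h₁, h₂}).ncard = 2 := by
      have hsub : ({h₁, h₂} : Set ℕ) ⊆ (K e).verts := by
        intro x hx
        simp only [Set.mem_insert_iff, Set.mem_singleton_iff] at hx
        rcases hx with rfl | rfl
        · exact hK1
        · exact hK2
      rw [Set.inter_eq_self_of_subset_right hsub, Set.ncard_pair hh12]
    have hrInK : rInEdges {h₁, h₂} (K e) = 0 := by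
      have hempty : {s' ∈ (K e).edgeSet | ∀ x ∈ s', x ∈ ({h₁, h₂} : Set ℕ)} = ∅ := by
        apply Set.eq_empty_iff_forall_notMem.mpr
        rintro s0 ⟨hs0, hall⟩
        obtain ⟨z', hzs', -, hz12'⟩ := hwit e s0 hs0
        exact hz12' (hall z' hzs')
      unfold rInEdges
      rw [hempty, Set.ncard_empty]
    have hchain : rdd {h₁, h₂} (K e) ≤ rdd {h₁, h₂} H := by
      have h := le_mRooted {h₁, h₂} hHfin (hKleH e)
      have hbal' : mRooted {h₁, h₂} H = rdd {h₁, h₂} H := hbal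
      rwa [hbal'] at h
    have hrddK : rdd {h₁, h₂} (K e) = (ε e : ℝ) / (ι e : ℝ) := by
      unfold rdd
      rw [hrInK, hvKnat e, hKroots]
      push_cast
      congr 1 <;> ring
    have hι1r : (1 : ℝ) ≤ (ι e : ℝ) := by exact_mod_cast hι1
    have hεlam : (ε e : ℝ) ≤ ((nedges H : ℝ) - 1) / ((nverts H : ℝ) - 2) * (ι e : ℝ) := by
      have h := hchain
      rw [hrddK, hrddH] at h
      rwa [div_le_iff₀ (by linarith : (0:ℝ) < (ι e : ℝ))] at h
    have hDpos : (0:ℝ) < (nverts H : ℝ) - 2 := by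
      have := hιleD e; linarith
    have h1 : (nedges H : ℝ) - 1 ≤ t * ((nverts H : ℝ) - 2) + t / mRooted R G := by
      have h2' : ((nedges H : ℝ) - 1) / t ≤ ((nverts H : ℝ) - 2) + 1 / mRooted R G := by
        linarith [hineq]
      have h3 := (div_le_iff₀ ht).mp h2'
      have h4 : ((nverts H : ℝ) - 2 + 1 / mRooted R G) * t =
          t * ((nverts H : ℝ) - 2) + t / mRooted R G := by
        field_simp
      linarith
    have htμ : (0:ℝ) ≤ t / mRooted R G := le_of_lt (div_pos ht hμ)
    have hfinal : ((nedges H : ℝ) - 1) / ((nverts H : ℝ) - 2) * (ι e : ℝ) ≤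
        t * (ι e : ℝ) + t / mRooted R G := by
      rw [div_mul_eq_mul_div, div_le_iff₀ hDpos]
      nlinarith [mul_le_mul_of_nonneg_right h1 (by linarith : (0:ℝ) ≤ (ι e : ℝ)),
        mul_nonneg htμ (sub_nonneg.mpr (hιleD e))]
    linarith
  -- build the subgraph G2 of G spanned by full-ish copies
  set Sv : Set ℕ := {p | p ∈ G.verts ∧ φ p ∈ Q.verts} with hSvdef
  have hSvsub : Sv ⊆ G.verts := fun p hp => hp.1
  have hSvfin : Sv.Finite := hGfin.subset hSvsub
  set E2 : Finset (Sym2 ℕ) := NRf.filter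
    (fun e => 1 ≤ ε e ∧ h₁ ∈ (K e).verts ∧ h₂ ∈ (K e).verts) with hE2def
  have hE2mem : ∀ {e}, e ∈ E2 ↔ e ∈ NRf ∧
      (1 ≤ ε e ∧ h₁ ∈ (K e).verts ∧ h₂ ∈ (K e).verts) := fun {e} => Finset.mem_filter
  have hE2edge : ∀ ⦃a b : ℕ⦄, G.Adj a b → s(a, b) ∈ (↑E2 : Set (Sym2 ℕ)) →
      a ∈ Sv := by
    intro a b hab hmem
    refine ⟨G.edge_vert hab, ?_⟩
    rw [Finset.mem_coe, hE2mem] at hmem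
    obtain ⟨hNR0, -, hK1, hK2⟩ := hmem
    have he : NRe G R (s(a, b)) := hNRmem.mp hNR0
    have hc3 := c3 _ he a b rfl
    have h1Q : ψ (s(a, b)) h₁ ∈ Q.verts := (hKvmem.mp hK1).2
    have h2Q : ψ (s(a, b)) h₂ ∈ Q.verts := (hKvmem.mp hK2).2
    have hmem' : φ a ∈ ({ψ (s(a, b)) h₁, ψ (s(a, b)) h₂} : Set ℕ) := by
      rw [hc3]; exact Set.mem_insert _ _
    simp only [Set.mem_insert_iff, Set.mem_singleton_iff] at hmem'
    rcases hmem' with h' | h'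
    · rw [h']; exact h1Q
    · rw [h']; exact h2Q
  set G2 : Sub ℕ := selSub G (↑E2) Sv hSvsub hE2edge with hG2def
  have hE2subG : (↑E2 : Set (Sym2 ℕ)) ⊆ G.edgeSet := by
    intro e he
    rw [Finset.mem_coe, hE2mem] at he
    exact (hNRmem.mp he.1).1
  have hG2edge : G2.edgeSet = (↑E2 : Set (Sym2 ℕ)) :=
    selSub_edgeSet G (↑E2) Sv hSvsub hE2edge hE2subG
  have hrInG2 : rInEdges R G2 = 0 := by
    have hempty : {s' ∈ G2.edgeSet | ∀ x ∈ s', x ∈ R} = ∅ := by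
      apply Set.eq_empty_iff_forall_notMem.mpr
      rintro s' ⟨hsE, hall⟩
      rw [hG2edge, Finset.mem_coe, hE2mem] at hsE
      exact (hNRmem.mp hsE.1).2 hall
    unfold rInEdges
    rw [hempty, Set.ncard_empty]
  have himGvR : Q.verts ∩ φ '' R = φ '' (Sv ∩ R) := by
    ext q; constructor
    · rintro ⟨hqQ, p, hpR, rfl⟩
      exact ⟨p, ⟨⟨hR hpR, hqQ⟩, hpR⟩, rfl⟩
    · rintro ⟨p, ⟨⟨-, hpQ⟩, hpR⟩, rfl⟩
      exact ⟨hpQ, p, hpR, rfl⟩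
  have himGvdiff : (Q.verts ∩ φ '' G.verts) \ φ '' R = φ '' (Sv \ R) := by
    ext q; constructor
    · rintro ⟨⟨hqQ, p, hp, rfl⟩, hnR⟩
      exact ⟨p, ⟨⟨hp, hqQ⟩, fun hpR => hnR ⟨p, hpR, rfl⟩⟩, rfl⟩
    · rintro ⟨p, ⟨⟨hpG, hpQ⟩, hpnR⟩, rfl⟩
      refine ⟨⟨hpQ, p, hpG, rfl⟩, ?_⟩
      rintro ⟨r, hrR, hreq⟩
      exact hpnR (by rwa [c1 (hR hrR) hpG hreq] at hrR)
  have hρcard : (Q.verts ∩ φ '' R).ncard = (Sv ∩ R).ncard := by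
    rw [himGvR]
    exact Set.ncard_image_of_injOn (c1.mono (fun p hp => hp.1.1))
  have hacard : ((Q.verts ∩ φ '' G.verts) \ φ '' R).ncard = (Sv \ R).ncard := by
    rw [himGvdiff]
    exact Set.ncard_image_of_injOn (c1.mono (fun p hp => hp.1.1))
  have hGvsplit : nverts G2 = (Sv ∩ R).ncard + (Sv \ R).ncard :=
    (Set.ncard_inter_add_ncard_diff_eq_ncard Sv R hSvfin).symm
  have hG2vR : G2.verts ∩ R = Sv ∩ R := rfl
  have hrddG2 : rdd R G2 = (E2.card : ℝ) / ((Sv \ R).ncard : ℝ) := by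
    unfold rdd
    have hne2 : nedges G2 = E2.card := by
      rw [nedges, hG2edge, Set.ncard_coe_finset]
    rw [hne2, hrInG2, hG2vR, hGvsplit]
    push_cast
    congr 1 <;> ring
  have hrddG2le : rdd R G2 ≤ mRooted R G :=
    le_mRooted R hGfin (selSub_le G (↑E2) Sv hSvsub hE2edge)
  -- real-valued global identities
  have hvreal : (nverts Q : ℝ) - ((Q.verts ∩ φ '' R).ncard : ℝ) =
      ((Sv \ R).ncard : ℝ) + ∑ e ∈ NRf, (ι e : ℝ) := by
    rw [hvQnat, hAsplit, hacard]
    push_cast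
    ring
  have hereal : (nedges Q : ℝ) - (rInEdges (φ '' R) Q : ℝ) = ∑ e ∈ NRf, (ε e : ℝ) := by
    rw [heQnat]
    push_cast
    ring
  -- main inequality on sums
  have hE2Sv : ∀ e ∈ E2, ∀ z ∈ e, z ∈ Sv := by
    intro e
    induction e with
    | _ x y =>
      intro he z hz
      have hxy : G.Adj x y :=
        SimpleGraph.Subgraph.mem_edgeSet.mp (hE2subG (Finset.mem_coe.mpr he))
      rcases Sym2.mem_iff.mp hz with rfl | rfl
      · exact hE2edge hxy (Finset.mem_coe.mpr he)
      · refine hE2edge (G.adj_symm hxy) ?_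
        rw [Sym2.eq_swap]
        exact Finset.mem_coe.mpr he
  have hmain : ∑ e ∈ NRf, (ε e : ℝ) ≤
      t * (((Sv \ R).ncard : ℝ) + ∑ e ∈ NRf, (ι e : ℝ)) := by
    have hsplit : ∑ e ∈ NRf, (ε e : ℝ) = ∑ e ∈ E2, (ε e : ℝ) +
        ∑ e ∈ NRf.filter (fun e => ¬(1 ≤ ε e ∧ h₁ ∈ (K e).verts ∧ h₂ ∈ (K e).verts)),
          (ε e : ℝ) := by
      rw [hE2def]
      exact (Finset.sum_filter_add_sum_filter_not NRf _ _).symm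
    have hιsplit : ∑ e ∈ E2, (t * (ι e : ℝ)) +
        ∑ e ∈ NRf.filter (fun e => ¬(1 ≤ ε e ∧ h₁ ∈ (K e).verts ∧ h₂ ∈ (K e).verts)),
          (t * (ι e : ℝ)) = t * ∑ e ∈ NRf, (ι e : ℝ) := by
      rw [hE2def, Finset.sum_filter_add_sum_filter_not NRf _ _, Finset.mul_sum]
    have hrest : ∑ e ∈ NRf.filter
        (fun e => ¬(1 ≤ ε e ∧ h₁ ∈ (K e).verts ∧ h₂ ∈ (K e).verts)), (ε e : ℝ) ≤
        ∑ e ∈ NRf.filter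
        (fun e => ¬(1 ≤ ε e ∧ h₁ ∈ (K e).verts ∧ h₂ ∈ (K e).verts)), (t * (ι e : ℝ)) :=
      Finset.sum_le_sum (fun e he => hB1 e (Finset.filter_subset _ _ he)
        (Finset.mem_filter.mp he).2)
    have haN0 : (0:ℝ) ≤ ((Sv \ R).ncard : ℝ) := Nat.cast_nonneg _
    rcases Finset.eq_empty_or_nonempty E2 with hE2e | hE2ne
    · rw [hsplit, hE2e]
      simp only [Finset.sum_empty, zero_add]
      have h6 : ∑ e ∈ NRf.filter
          (fun e => ¬(1 ≤ ε e ∧ h₁ ∈ (K e).verts ∧ h₂ ∈ (K e).verts)), (t * (ι e : ℝ)) =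
          t * ∑ e ∈ NRf, (ι e : ℝ) := by
        rw [← hιsplit, hE2e]
        simp
      rw [h6] at hrest
      have h7 : t * ∑ e ∈ NRf, (ι e : ℝ) ≤
          t * (((Sv \ R).ncard : ℝ) + ∑ e ∈ NRf, (ι e : ℝ)) := by
        apply mul_le_mul_of_nonneg_left _ ht.le
        linarith
      linarith
    · obtain ⟨e₀, he₀⟩ := hE2ne
      have haN1 : 1 ≤ (Sv \ R).ncard := by
        have he0NR : NRe G R e₀ := hNRmem.mp (hE2mem.mp he₀).1
        have hnot := he0NR.2
        push_neg at hnot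
        obtain ⟨z, hze, hzR⟩ := hnot
        have hzSv : z ∈ Sv := hE2Sv e₀ he₀ z hze
        exact (Set.ncard_pos hSvfin.diff).mpr ⟨z, hzSv, hzR⟩
      have haNpos : (0:ℝ) < ((Sv \ R).ncard : ℝ) := by
        have : (1:ℝ) ≤ ((Sv \ R).ncard : ℝ) := by exact_mod_cast haN1
        linarith
      have hcard1 : 1 ≤ E2.card := Finset.card_pos.mpr ⟨e₀, he₀⟩
      have h5 : (E2.card : ℝ) / ((Sv \ R).ncard : ℝ) ≤ mRooted R G := by
        rw [← hrddG2]; exact hrddG2le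
      have hμpos : 0 < mRooted R G := by
        have h6 : (0:ℝ) < (E2.card : ℝ) / ((Sv \ R).ncard : ℝ) :=
          div_pos (by exact_mod_cast hcard1) haNpos
        linarith
      have hE2a : (E2.card : ℝ) ≤ mRooted R G * ((Sv \ R).ncard : ℝ) := by
        rwa [div_le_iff₀ haNpos] at h5
      have hE2sum : ∑ e ∈ E2, (ε e : ℝ) ≤
          ∑ e ∈ E2, (t * (ι e : ℝ)) + (E2.card : ℝ) * (t / mRooted R G) := by
        calc ∑ e ∈ E2, (ε e : ℝ) ≤ ∑ e ∈ E2, (t * (ι e : ℝ) + t / mRooted R G) :=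
            Finset.sum_le_sum (fun e he => by
              obtain ⟨hNRe, hε1, hK1, hK2⟩ := hE2mem.mp he
              exact hB2 e hNRe hε1 hK1 hK2 hμpos)
          _ = ∑ e ∈ E2, (t * (ι e : ℝ)) + (E2.card : ℝ) * (t / mRooted R G) := by
            rw [Finset.sum_add_distrib, Finset.sum_const, nsmul_eq_mul]
      have hlast : (E2.card : ℝ) * (t / mRooted R G) ≤ t * ((Sv \ R).ncard : ℝ) := by
        calc (E2.card : ℝ) * (t / mRooted R G) ≤
            (mRooted R G * ((Sv \ R).ncard : ℝ)) * (t / mRooted R G) :=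
              mul_le_mul_of_nonneg_right hE2a (le_of_lt (div_pos ht hμpos))
          _ = t * ((Sv \ R).ncard : ℝ) := by
              field_simp
      rw [hsplit]
      have := hιsplit
      linarith
  -- conclusion
  unfold rdd
  refine div_le_of_le_mul' ht ?_ ?_
  · rw [hvreal]
    exact add_nonneg (Nat.cast_nonneg _) (Finset.sum_nonneg fun e _ => Nat.cast_nonneg _)
  · calc (nedges Q : ℝ) - (rInEdges (φ '' R) Q : ℝ) = ∑ e ∈ NRf, (ε e : ℝ) := hereal
      _ ≤ t * (((Sv \ R).ncard : ℝ) + ∑ e ∈ NRf, (ι e : ℝ)) := hmain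
      _ = t * ((nverts Q : ℝ) - ((Q.verts ∩ φ '' R).ncard : ℝ)) := by rw [hvreal]


end OG
end
end

section
/- Let r ≥ 2 and suppose G is a 2-balanced graph with density d(G) = e_G/v_G at least 1. Then max over all proper subsets R ⊊ V(G) of m(R,G) is at most v_G − 1, and moreover v_G − 1 < (1/m(G) − 1/m̄ʳ₂(G))^{−1} (in particular 1/m(G) − 1/m̄ʳ₂(G) > 0). -/
open Filter Asymptotics
open scoped Classical ENNReal

noncomputable section

namespace OG

variable {W U X : Type*}

variable {ι : Type*} [Fintype ι]

/-! ### Auxiliary lemmas for Statement 15 -/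

lemma exists_ends {W : Type*} {H : Sub W} {e : Sym2 W} (he : e ∈ H.edgeSet) :
    ∃ x y, x ∈ H.verts ∧ y ∈ H.verts ∧ x ≠ y ∧ e = s(x, y) ∧ H.Adj x y := by
  induction e with
  | _ x y =>
    have hadj : H.Adj x y := he
    exact ⟨x, y, H.edge_vert hadj, H.edge_vert hadj.symm, (H.adj_sub hadj).ne, rfl, hadj⟩

lemma edgeSet_fin {W : Type*} {H : Sub W} (hfin : H.verts.Finite) : H.edgeSet.Finite := by
  apply Set.Finite.subset ((hfin.prod hfin).image (fun p => s(p.1, p.2)))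
  intro e he
  obtain ⟨x, y, hx, hy, -, rfl, -⟩ := exists_ends he
  exact ⟨(x, y), ⟨hx, hy⟩, rfl⟩

lemma two_le_nverts {W : Type*} {H : Sub W} (hfin : H.verts.Finite) (he : 1 ≤ nedges H) :
    2 ≤ nverts H := by
  have hne : H.edgeSet.Nonempty := by
    rw [Set.nonempty_iff_ne_empty]; intro h
    simp [nedges, h] at he
  obtain ⟨e, hee⟩ := hne
  obtain ⟨x, y, hx, hy, hxy, -, -⟩ := exists_ends hee
  exact (Set.one_lt_ncard_iff hfin).mpr ⟨x, y, hx, hy, hxy⟩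

lemma nedges_le_one {W : Type*} {H : Sub W} (hv : nverts H = 2) :
    nedges H ≤ 1 := by
  obtain ⟨x, y, hxy, hset⟩ := Set.ncard_eq_two.mp hv
  have hsub : H.edgeSet ⊆ {s(x, y)} := by
    intro e hee
    obtain ⟨a, b, ha, hb, hab, rfl, -⟩ := exists_ends hee
    rw [hset] at ha hb
    simp only [Set.mem_insert_iff, Set.mem_singleton_iff] at ha hb
    rcases ha with rfl | rfl <;> rcases hb with rfl | rfl <;> simp_all [Sym2.eq_swap]
  calc nedges H ≤ ({s(x, y)} : Set (Sym2 W)).ncard :=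
        Set.ncard_le_ncard hsub (Set.finite_singleton _)
    _ = 1 := Set.ncard_singleton _

lemma ncard_prod {α β : Type*} (s : Set α) (t : Set β) :
    (s ×ˢ t).ncard = s.ncard * t.ncard := by
  rw [← Nat.card_coe_set_eq, ← Nat.card_coe_set_eq, ← Nat.card_coe_set_eq,
    ← Nat.card_prod]
  exact Nat.card_congr (Equiv.Set.prod s t)

lemma rdd_le {G : Sub W} (hGfin : G.verts.Finite) (hv3 : 3 ≤ nverts G) (R : Set W)
    {H : Sub W} (hH : H ≤ G) : rdd R H ≤ (nverts G : ℝ) - 1 := by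
  have Hvfin : H.verts.Finite := hGfin.subset hH.1
  have Hefin : H.edgeSet.Finite := edgeSet_fin Hvfin
  set Ef : Set (Sym2 W) := {e ∈ H.edgeSet | ∀ x ∈ e, x ∈ R} with hEf
  set E' : Set (Sym2 W) := H.edgeSet \ Ef with hE'
  set S : Set W := H.verts \ R with hS
  have hEfsub : Ef ⊆ H.edgeSet := Set.sep_subset _ _
  have hnum : (nedges H : ℝ) - (rInEdges R H : ℝ) = (E'.ncard : ℝ) := by
    rw [hE', Set.cast_ncard_sdiff hEfsub Hefin]; rfl
  have hden : (nverts H : ℝ) - ((H.verts ∩ R).ncard : ℝ) = (S.ncard : ℝ) := by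
    have : S = H.verts \ (H.verts ∩ R) := by rw [hS, Set.diff_self_inter]
    rw [this, Set.cast_ncard_sdiff Set.inter_subset_left Hvfin]; rfl
  rw [rdd, hnum, hden]
  have hv1 : (1:ℝ) ≤ (nverts G : ℝ) - 1 := by
    have : (3:ℝ) ≤ (nverts G : ℝ) := by exact_mod_cast hv3
    linarith
  rcases Nat.eq_zero_or_pos S.ncard with hS0 | hSpos
  · -- S empty: all verts in R, so E' empty
    have hSempty : S = ∅ := (Set.ncard_eq_zero (Hvfin.diff)).mp hS0
    have hE'0 : E' = ∅ := by
      ext e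
      simp only [Set.mem_empty_iff_false, iff_false]
      rintro ⟨hee, hnotf⟩
      refine hnotf ⟨hee, fun x hx => ?_⟩
      obtain ⟨a, b, ha, hb, -, rfl, -⟩ := exists_ends hee
      have hsub : H.verts ⊆ R := by
        intro z hz
        by_contra hzr
        exact (Set.eq_empty_iff_forall_notMem.mp hSempty z) ⟨hz, hzr⟩
      rcases Sym2.mem_iff.mp hx with rfl | rfl
      · exact hsub ha
      · exact hsub hb
    simp [hE'0, hS0]
    linarith
  · -- main counting
    have hWne : Nonempty W := by
      obtain ⟨x, -⟩ := Set.nonempty_of_ncard_ne_zero (show nverts G ≠ 0 by omega)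
      exact ⟨x⟩
    have hex : ∀ ed ∈ E', ∃ p : W × W, p.1 ∈ S ∧ p.2 ∈ G.verts ∧ p.1 ≠ p.2 ∧
        ed = s(p.1, p.2) := by
      intro ed hed
      obtain ⟨hee, hnf⟩ := hed
      have : ¬ ∀ x ∈ ed, x ∈ R := fun h => hnf ⟨hee, h⟩
      push_neg at this
      obtain ⟨x, hxed, hxR⟩ := this
      have hoth := Sym2.other_spec hxed
      set y := Sym2.Mem.other hxed with hy
      have hadj : H.Adj x y := by
        rw [← SimpleGraph.Subgraph.mem_edgeSet, hoth]; exact hee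
      exact ⟨(x, y), ⟨H.edge_vert hadj, hxR⟩, hH.1 (H.edge_vert hadj.symm),
        (H.adj_sub hadj).ne, hoth.symm⟩
    choose! g hg using hex
    have hinj : Set.InjOn g E' := by
      intro a ha b hb hab
      have := (hg a ha).2.2.2
      rw [this, (hg b hb).2.2.2, hab]
    set T : Set (W × W) := (S ×ˢ G.verts) \ ((fun x => (x, x)) '' S) with hT
    have hmaps : ∀ ed ∈ E', g ed ∈ T := by
      intro ed hed
      obtain ⟨h1, h2, h3, -⟩ := hg ed hed
      refine ⟨⟨h1, h2⟩, ?_⟩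
      rintro ⟨z, hz, hzz⟩
      apply h3
      rw [← hzz]
    have hTfin : T.Finite := Set.Finite.diff ((Hvfin.diff).prod hGfin)
    have hle := Set.ncard_le_ncard_of_injOn g hmaps hinj hTfin
    have himg : ((fun x => (x, x)) '' S) ⊆ S ×ˢ G.verts := by
      rintro p ⟨z, hz, rfl⟩
      exact ⟨hz, hH.1 hz.1⟩
    have hinj2 : Set.InjOn (fun x : W => (x, x)) S := by
      intro a _ b _ h
      exact ((Prod.mk.injEq _ _ _ _).mp h).1
    have h1 := Set.ncard_diff_add_ncard_of_subset himg ((Hvfin.diff).prod hGfin)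
    have h2 : ((fun x : W => (x, x)) '' S).ncard = S.ncard :=
      Set.ncard_image_of_injOn hinj2
    have h3 : (S ×ˢ G.verts).ncard = S.ncard * nverts G := ncard_prod _ _
    rw [div_le_iff₀ (show (0:ℝ) < (S.ncard : ℝ) by exact_mod_cast hSpos)]
    have hTadd : (T.ncard : ℝ) + S.ncard = S.ncard * nverts G := by
      rw [h2, h3] at h1
      exact_mod_cast h1
    have hle' : (E'.ncard : ℝ) ≤ (T.ncard : ℝ) := by exact_mod_cast hle
    nlinarith [hle', hTadd, (show (0:ℝ) < (S.ncard:ℝ) by exact_mod_cast hSpos)]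


def yaux (E V : ℝ) : ℕ → ℝ
  | 0 => V / E
  | k+1 => (V - 2 + yaux E V k) / E

section Main
variable {W : Type*} {G : Sub W}

lemma nedges_mono (hGfin : G.verts.Finite) {H : Sub W} (hH : H ≤ G) :
    nedges H ≤ nedges G :=
  Set.ncard_le_ncard (SimpleGraph.Subgraph.edgeSet_mono hH) (edgeSet_fin hGfin)

lemma nverts_mono (hGfin : G.verts.Finite) {H : Sub W} (hH : H ≤ G) :
    nverts H ≤ nverts G :=
  Set.ncard_le_ncard hH.1 hGfin

/-- numeric form of 2-balancedness -/
lemma h2bal_prod (hGfin : G.verts.Finite) (hbal : TwoBalanced G)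
    {H : Sub W} (hH : H ≤ G) (he : 1 ≤ nedges H) (hvH : 3 ≤ nverts H)
    (hv3 : 3 ≤ nverts G) :
    ((nedges H : ℝ) - 1) * ((nverts G : ℝ) - 2) ≤
      ((nedges G : ℝ) - 1) * ((nverts H : ℝ) - 2) := by
  have hEfin := edgeSet_fin hGfin
  have hbdd : BddAbove (Set.range fun H : {H : Sub W // H ≤ G ∧ 1 ≤ nedges H} => d2 H.1) := by
    refine ⟨(nedges G : ℝ), ?_⟩
    rintro x ⟨⟨K, hle, hke⟩, rfl⟩
    simp only
    by_cases h3 : 3 ≤ nverts K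
    · have h1 : (0:ℝ) ≤ (nedges K : ℝ) - 1 := by
        have : (1:ℝ) ≤ (nedges K : ℝ) := by exact_mod_cast hke
        linarith
      have h2 : (1:ℝ) ≤ (nverts K : ℝ) - 2 := by
        have : (3:ℝ) ≤ (nverts K : ℝ) := by exact_mod_cast h3
        linarith
      calc d2 K ≤ (nedges K : ℝ) - 1 := div_le_self h1 h2
        _ ≤ (nedges G : ℝ) := by
            have : nedges K ≤ nedges G := nedges_mono hGfin hle
            have : (nedges K : ℝ) ≤ (nedges G : ℝ) := by exact_mod_cast this
            linarith
    · have h2 : (nverts K : ℝ) - 2 ≤ 0 := by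
        have : nverts K ≤ 2 := by omega
        have : (nverts K : ℝ) ≤ 2 := by exact_mod_cast this
        linarith
      have h1 : (0:ℝ) ≤ (nedges K : ℝ) - 1 := by
        have : (1:ℝ) ≤ (nedges K : ℝ) := by exact_mod_cast hke
        linarith
      calc d2 K ≤ 0 := div_nonpos_of_nonneg_of_nonpos h1 h2
        _ ≤ (nedges G : ℝ) := by positivity
  have hle2 : d2 H ≤ d2 G := by
    have := le_ciSup hbdd (⟨H, hH, he⟩ : {H : Sub W // H ≤ G ∧ 1 ≤ nedges H})
    rw [show (⨆ K : {H : Sub W // H ≤ G ∧ 1 ≤ nedges H}, d2 K.1) = m2D G from rfl, hbal] at this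
    exact this
  have hden1 : (0:ℝ) < (nverts H : ℝ) - 2 := by
    have : (3:ℝ) ≤ (nverts H : ℝ) := by exact_mod_cast hvH
    linarith
  have hden2 : (0:ℝ) < (nverts G : ℝ) - 2 := by
    have : (3:ℝ) ≤ (nverts G : ℝ) := by exact_mod_cast hv3
    linarith
  exact (div_le_div_iff₀ hden1 hden2).mp hle2

/-- balancedness from 2-balancedness -/
lemma balanced (hGfin : G.verts.Finite) (hbal : TwoBalanced G)
    (hv3 : 3 ≤ nverts G) (hev : nverts G ≤ nedges G)
    {H : Sub W} (hH : H ≤ G) :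
    (nedges H : ℝ) * (nverts G : ℝ) ≤ (nedges G : ℝ) * (nverts H : ℝ) := by
  have hV3 : (3:ℝ) ≤ (nverts G : ℝ) := by exact_mod_cast hv3
  have hVE : (nverts G : ℝ) ≤ (nedges G : ℝ) := by exact_mod_cast hev
  rcases Nat.eq_zero_or_pos (nedges H) with h0 | h1
  · rw [h0]; push_cast; rw [zero_mul]; positivity
  · have hvH2 : 2 ≤ nverts H := two_le_nverts (hGfin.subset hH.1) h1
    by_cases h3 : 3 ≤ nverts H
    · have key := h2bal_prod hGfin hbal hH h1 h3 hv3
      have hvHV : (nverts H : ℝ) ≤ (nverts G : ℝ) := by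
        exact_mod_cast nverts_mono hGfin hH
      have hvH3 : (3:ℝ) ≤ (nverts H : ℝ) := by exact_mod_cast h3
      nlinarith [key, mul_le_mul_of_nonneg_left key (by linarith : (0:ℝ) ≤ (nverts G : ℝ)),
        mul_nonneg (by linarith : (0:ℝ) ≤ (nverts G : ℝ) - (nverts H : ℝ))
          (by linarith : (0:ℝ) ≤ 2 * (nedges G : ℝ) - (nverts G : ℝ))]
    · have hvH : nverts H = 2 := by omega
      have heH : nedges H = 1 := le_antisymm (nedges_le_one hvH) h1
      rw [heH, hvH]
      push_cast
      linarith

/-- the key step inequality -/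
lemma step_ineq (hGfin : G.verts.Finite) (hbal : TwoBalanced G)
    (hv3 : 3 ≤ nverts G) (hev : nverts G ≤ nedges G)
    {t : ℝ} (ht1 : ((nverts G : ℝ) - 2) / ((nedges G : ℝ) - 1) ≤ t) (ht2 : t ≤ 1)
    {H : Sub W} (hH : H ≤ G) :
    (nedges H : ℝ) / ((nverts H : ℝ) - 2 + t) ≤
      (nedges G : ℝ) / ((nverts G : ℝ) - 2 + t) := by
  have hV3 : (3:ℝ) ≤ (nverts G : ℝ) := by exact_mod_cast hv3
  have hVE : (nverts G : ℝ) ≤ (nedges G : ℝ) := by exact_mod_cast hev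
  have hE1 : (0:ℝ) < (nedges G : ℝ) - 1 := by linarith
  have ht0 : 0 < t := lt_of_lt_of_le (div_pos (by linarith) hE1) ht1
  have ht1' : (nverts G : ℝ) - 2 ≤ t * ((nedges G : ℝ) - 1) :=
    (div_le_iff₀ hE1).mp ht1
  have hdenG : (0:ℝ) < (nverts G : ℝ) - 2 + t := by linarith
  rcases Nat.eq_zero_or_pos (nedges H) with h0 | h1
  · rw [h0]; push_cast; rw [zero_div]; positivity
  · have hvH2 : 2 ≤ nverts H := two_le_nverts (hGfin.subset hH.1) h1
    have hvH2' : (2:ℝ) ≤ (nverts H : ℝ) := by exact_mod_cast hvH2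
    have hdenH : (0:ℝ) < (nverts H : ℝ) - 2 + t := by linarith
    rw [div_le_div_iff₀ hdenH hdenG]
    by_cases h3 : 3 ≤ nverts H
    · have key := h2bal_prod hGfin hbal hH h1 h3 hv3
      have hvHV : (nverts H : ℝ) ≤ (nverts G : ℝ) := by
        exact_mod_cast nverts_mono hGfin hH
      have heHE : (nedges H : ℝ) ≤ (nedges G : ℝ) := by
        exact_mod_cast nedges_mono hGfin hH
      have k2 : ((nedges G : ℝ) - 1) * ((nverts G : ℝ) - (nverts H : ℝ)) ≤
          ((nedges G : ℝ) - (nedges H : ℝ)) * ((nverts G : ℝ) - 2) := by nlinarith [key]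
      have k25 : ((nverts G : ℝ) - 2) * ((nedges G : ℝ) - (nedges H : ℝ)) ≤
          (t * ((nedges G : ℝ) - 1)) * ((nedges G : ℝ) - (nedges H : ℝ)) :=
        mul_le_mul_of_nonneg_right ht1' (by linarith)
      have k3 : (nverts G : ℝ) - (nverts H : ℝ) ≤ t * ((nedges G : ℝ) - (nedges H : ℝ)) := by
        nlinarith [k2, k25]
      nlinarith [key, k3]
    · have hvH : nverts H = 2 := by omega
      have heH : nedges H = 1 := le_antisymm (nedges_le_one hvH) h1
      rw [heH, hvH]
      push_cast
      nlinarith [ht1']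

lemma dd_bdd (hGfin : G.verts.Finite) :
    BddAbove (Set.range fun H : {H : Sub W // H ≤ G} => dd H.1) := by
  refine ⟨(nedges G : ℝ), ?_⟩
  rintro x ⟨⟨K, hle⟩, rfl⟩
  simp only
  have heKE : (nedges K : ℝ) ≤ (nedges G : ℝ) := by exact_mod_cast nedges_mono hGfin hle
  rcases Nat.eq_zero_or_pos (nverts K) with h0 | h1
  · rw [dd, h0]; push_cast; rw [div_zero]; positivity
  · have h1' : (1:ℝ) ≤ (nverts K : ℝ) := by exact_mod_cast h1
    calc dd K ≤ (nedges K : ℝ) := div_le_self (by positivity) h1'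
      _ ≤ _ := heKE

lemma mD_eq (hGfin : G.verts.Finite) (hbal : TwoBalanced G)
    (hv3 : 3 ≤ nverts G) (hev : nverts G ≤ nedges G) :
    mD G = dd G := by
  haveI : Nonempty {H : Sub W // H ≤ G} := ⟨⟨G, le_rfl⟩⟩
  refine le_antisymm (ciSup_le ?_) (le_ciSup (dd_bdd hGfin) ⟨G, le_rfl⟩)
  rintro ⟨K, hle⟩
  simp only
  rcases Nat.eq_zero_or_pos (nedges K) with h0 | h1
  · rw [dd, h0]
    push_cast
    rw [zero_div]
    rw [dd]
    positivity
  · have hvK2 : 2 ≤ nverts K := two_le_nverts (hGfin.subset hle.1) h1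
    have hvK2' : (0:ℝ) < (nverts K : ℝ) := by
      have : (2:ℝ) ≤ (nverts K : ℝ) := by exact_mod_cast hvK2
      linarith
    have hv0 : (0:ℝ) < (nverts G : ℝ) := by
      have : (3:ℝ) ≤ (nverts G : ℝ) := by exact_mod_cast hv3
      linarith
    rw [dd, dd, div_le_div_iff₀ hvK2' hv0]
    exact balanced hGfin hbal hv3 hev hle

lemma mbar_bdd (hGfin : G.verts.Finite) {t : ℝ} (ht : 0 < t) :
    BddAbove (Set.range fun H : {H : Sub W // H ≤ G} =>
      (nedges H.1 : ℝ) / ((nverts H.1 : ℝ) - 2 + t)) := by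
  refine ⟨(nedges G : ℝ) / t, ?_⟩
  rintro x ⟨⟨K, hle⟩, rfl⟩
  simp only
  have heKE : (nedges K : ℝ) ≤ (nedges G : ℝ) := by exact_mod_cast nedges_mono hGfin hle
  rcases Nat.eq_zero_or_pos (nedges K) with h0 | h1
  · rw [h0]; push_cast; rw [zero_div]; positivity
  · have hvK2 : 2 ≤ nverts K := two_le_nverts (hGfin.subset hle.1) h1
    have hvK2' : (2:ℝ) ≤ (nverts K : ℝ) := by exact_mod_cast hvK2
    exact div_le_div₀ (by positivity) heKE ht (by linarith)

lemma mbar_eq (hGfin : G.verts.Finite) (hbal : TwoBalanced G)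
    (hv3 : 3 ≤ nverts G) (hev : nverts G ≤ nedges G) :
    ∀ k : ℕ, mbar G (k+1) = (yaux (nedges G : ℝ) (nverts G : ℝ) k)⁻¹ ∧
      ((nverts G : ℝ) - 2) / ((nedges G : ℝ) - 1) ≤ yaux (nedges G : ℝ) (nverts G : ℝ) k ∧
      yaux (nedges G : ℝ) (nverts G : ℝ) k ≤ (nverts G : ℝ) / (nedges G : ℝ) := by
  have hV3 : (3:ℝ) ≤ (nverts G : ℝ) := by exact_mod_cast hv3
  have hVE : (nverts G : ℝ) ≤ (nedges G : ℝ) := by exact_mod_cast hev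
  have hE1 : (0:ℝ) < (nedges G : ℝ) - 1 := by linarith
  have hE0 : (0:ℝ) < (nedges G : ℝ) := by linarith
  have hV0 : (0:ℝ) < (nverts G : ℝ) := by linarith
  have htstar : (0:ℝ) < ((nverts G : ℝ) - 2) / ((nedges G : ℝ) - 1) :=
    div_pos (by linarith) hE1
  intro k
  induction k with
  | zero =>
    refine ⟨?_, ?_, le_refl _⟩
    · show mbar G 1 = _
      rw [mbar, yaux, inv_div]
      exact mD_eq hGfin hbal hv3 hev
    · rw [yaux, div_le_div_iff₀ hE1 hE0]
      nlinarith
  | succ k ih =>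
    obtain ⟨ih1, ih2, ih3⟩ := ih
    have hyk0 : 0 < yaux (nedges G : ℝ) (nverts G : ℝ) k := lt_of_lt_of_le htstar ih2
    have hyk1 : yaux (nedges G : ℝ) (nverts G : ℝ) k ≤ 1 := by
      calc _ ≤ (nverts G : ℝ) / (nedges G : ℝ) := ih3
        _ ≤ 1 := (div_le_one hE0).mpr hVE
    have hinv : 1 / mbar G (k+1) = yaux (nedges G : ℝ) (nverts G : ℝ) k := by
      rw [ih1, one_div, inv_inv]
    have hrec : mbar G (k+1+1) = ⨆ H : {H : Sub W // H ≤ G},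
        (nedges H.1 : ℝ) / ((nverts H.1 : ℝ) - 2 + 1 / mbar G (k + 1)) := by
      rw [mbar]
    haveI : Nonempty {H : Sub W // H ≤ G} := ⟨⟨G, le_rfl⟩⟩
    have hmain : mbar G (k+1+1) =
        (nedges G : ℝ) / ((nverts G : ℝ) - 2 + yaux (nedges G : ℝ) (nverts G : ℝ) k) := by
      rw [hrec]
      simp only [hinv]
      refine le_antisymm (ciSup_le ?_) (le_ciSup (mbar_bdd hGfin hyk0) ⟨G, le_rfl⟩)
      rintro ⟨K, hle⟩
      exact step_ineq hGfin hbal hv3 hev ih2 hyk1 hle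
    refine ⟨?_, ?_, ?_⟩
    · rw [hmain, yaux, inv_div]
    · rw [yaux, div_le_div_iff₀ hE1 hE0]
      rw [div_le_iff₀ hE1] at ih2
      nlinarith [ih2]
    · rw [yaux, div_le_div_iff₀ hE0 hE0]
      nlinarith [hyk1]
lemma gbound {E V : ℝ} (hV3 : (3:ℝ) ≤ V) (hVE : V ≤ E) :
    ∀ k : ℕ, 1 ≤ k → (2*E - V)/E^2 ≤ V/E - yaux E V k ∧
      V/E - yaux E V k < (2*E - V)/(E*(E-1)) := by
  have hE0 : (0:ℝ) < E := by linarith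
  have hE1 : (0:ℝ) < E - 1 := by linarith
  have hnum : (0:ℝ) < 2*E - V := by linarith
  intro k
  induction k with
  | zero => omega
  | succ k ih =>
    intro _
    by_cases hk : 1 ≤ k
    · obtain ⟨hl, hu⟩ := ih hk
      have hg : V/E - yaux E V (k+1) = (2*E-V)/E^2 + (V/E - yaux E V k)/E := by
        rw [yaux]; field_simp; ring
      have hBid : (2*E-V)/E^2 + ((2*E-V)/(E*(E-1)))/E = (2*E-V)/(E*(E-1)) := by
        field_simp; ring
      constructor
      · have h1 : (0:ℝ) ≤ (V/E - yaux E V k)/E := by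
          apply div_nonneg _ hE0.le
          have : (0:ℝ) ≤ (2*E - V)/E^2 := by positivity
          linarith
        linarith [hg, h1]
      · have h2 : (V/E - yaux E V k)/E < ((2*E-V)/(E*(E-1)))/E :=
          div_lt_div_of_pos_right hu hE0
        linarith [hg, hBid, h2]
    · have hk0 : k = 0 := by omega
      subst hk0
      have hg1 : V/E - yaux E V 1 = (2*E-V)/E^2 := by
        rw [yaux, yaux]; field_simp; ring
      rw [hg1]
      refine ⟨le_refl _, ?_⟩
      rw [div_lt_div_iff₀ (by positivity) (by positivity)]
      nlinarith


theorem stmt15 {W : Type} (G : Sub W) (hGfin : G.verts.Finite)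
    (r : ℕ) (hr : 2 ≤ r) (hbal : TwoBalanced G) (hd : 1 ≤ dd G) :
    (∀ R : Set W, R ⊆ G.verts → R ≠ G.verts → mRooted R G ≤ (nverts G : ℝ) - 1) ∧
    0 < 1 / mD G - 1 / mbar G r ∧
    (nverts G : ℝ) - 1 < (1 / mD G - 1 / mbar G r)⁻¹ := by
  -- basic numeric facts
  have hv1 : 1 ≤ nverts G := by
    by_contra h
    have h0 : nverts G = 0 := by omega
    rw [dd, h0] at hd
    push_cast at hd
    rw [div_zero] at hd
    linarith
  have hev : nverts G ≤ nedges G := by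
    have hv0 : (0:ℝ) < (nverts G : ℝ) := by exact_mod_cast hv1
    have := (one_le_div hv0).mp hd
    exact_mod_cast this
  have hv3 : 3 ≤ nverts G := by
    have h2 : 2 ≤ nverts G := two_le_nverts hGfin (by omega)
    by_contra h
    have hv2 : nverts G = 2 := by omega
    have := nedges_le_one (H := G) hv2
    omega
  have hV3 : (3:ℝ) ≤ (nverts G : ℝ) := by exact_mod_cast hv3
  have hVE : (nverts G : ℝ) ≤ (nedges G : ℝ) := by exact_mod_cast hev
  have hE0 : (0:ℝ) < (nedges G : ℝ) := by linarith
  have hE1 : (0:ℝ) < (nedges G : ℝ) - 1 := by linarith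
  have hV0 : (0:ℝ) < (nverts G : ℝ) := by linarith
  haveI : Nonempty {H : Sub W // H ≤ G} := ⟨⟨G, le_rfl⟩⟩
  refine ⟨?_, ?_⟩
  · intro R _ _
    refine ciSup_le ?_
    rintro ⟨H, hle⟩
    exact rdd_le hGfin hv3 R hle
  set E := (nedges G : ℝ)
  set V := (nverts G : ℝ)
  obtain ⟨k, rfl⟩ : ∃ k, r = k + 1 := ⟨r - 1, by omega⟩
  have hk1 : 1 ≤ k := by omega
  have h1 : 1 / mD G = V / E := by
    rw [mD_eq hGfin hbal hv3 hev, dd, one_div_div]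
  have hbar := mbar_eq hGfin hbal hv3 hev k
  have h2 : 1 / mbar G (k+1) = yaux E V k := by
    rw [hbar.1, one_div, inv_inv]
  rw [h1, h2]
  have hg := gbound hV3 hVE k hk1
  have hδ : (0:ℝ) < (2*E - V)/E^2 := by
    apply div_pos (by linarith) (by positivity)
  have hBle : ((2*E - V)/(E*(E-1))) * (V - 1) ≤ 1 := by
    rw [div_mul_eq_mul_div, div_le_one (by positivity)]
    nlinarith [mul_nonneg (by linarith : (0:ℝ) ≤ E - V) (by linarith : (0:ℝ) ≤ E - V + 1)]
  have hgpos : 0 < V/E - yaux E V k := lt_of_lt_of_le hδ hg.1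
  refine ⟨hgpos, ?_⟩
  rw [← one_div, lt_div_iff₀ hgpos]
  have hV1 : (0:ℝ) < V - 1 := by linarith
  calc (V - 1) * (V/E - yaux E V k) < (V - 1) * ((2*E - V)/(E*(E-1))) := by
        exact mul_lt_mul_of_pos_left hg.2 hV1
    _ ≤ 1 := by linarith [hBle]

end Main

end OG
end
end
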